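/- arXiv:1702.04575 — 3 statements merged into one kernel-verified Lean document; each statement's English description precedes it below -/
import Mathlib

section
/- Let Q be a finite quiver, S a reduced set of paths of length at least 2, and n ≥ 1. If w is an n-overlap for S, then there exists a unique path w' such that w' is a left divisor of w (i.e. w = w'u for some path u) and w' is an (n−1)-overlap for S. -/
universe u v

/-! Combinatorics of paths in a quiver: divisibility, overlaps, quasioverlaps. -/

/-- The type of all paths in a quiver `V`, bundled with their endpoints. -/
abbrev PathIn (V : Type u) [Quiver.{v + 1} V] : Type (max u (v + 1)) :=
  Σ a b : V, Quiver.Path a b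

namespace PathIn

variable {V : Type u} [Quiver.{v + 1} V]

/-- Source of a bundled path. -/
def src (p : PathIn V) : V := p.1

/-- Target of a bundled path. -/
def tgt (p : PathIn V) : V := p.2.1

/-- Length of a bundled path. -/
def len (p : PathIn V) : ℕ := p.2.2.length

/-- The path of length zero at a vertex. -/
def vert (a : V) : PathIn V := ⟨a, a, Quiver.Path.nil⟩

/-- Concatenation of bundled paths (junk value `p` if the endpoints do not match). -/
noncomputable def comp (p q : PathIn V) : PathIn V :=
  open Classical in
  if h : p.tgt = q.src then ⟨p.1, q.2.1, p.2.2.comp (q.2.2.cast h.symm rfl)⟩ else p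

/-- `LDiv p q` : `p` divides `q` on the left, i.e. `q = p v` for some path `v`. -/
def LDiv (p q : PathIn V) : Prop :=
  ∃ v : PathIn V, p.tgt = v.src ∧ q = p.comp v

/-- `RDiv p q` : `p` divides `q` on the right, i.e. `q = u p` for some path `u`. -/
def RDiv (p q : PathIn V) : Prop :=
  ∃ u : PathIn V, u.tgt = p.src ∧ q = u.comp p

/-- `Div p q` : `p` divides `q`, i.e. `q = u p v` for some paths `u, v`. -/
def Div (p q : PathIn V) : Prop :=
  ∃ u v : PathIn V, u.tgt = p.src ∧ p.tgt = v.src ∧ q = (u.comp p).comp v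

/-- A set of paths is reduced if no element of it properly divides another element. -/
def Reduced (S : Set (PathIn V)) : Prop :=
  ∀ q ∈ S, ∀ p ∈ S, p ≠ q → ¬ Div p q

/-- `p` is an `S`-path if some element of `S` divides it on the right. -/
def IsSPath (S : Set (PathIn V)) (p : PathIn V) : Prop :=
  ∃ s ∈ S, RDiv s p

/-- `q` `S`-vanishes `p` (written `q ∣_S p`): `p = q u` where no element of `S` divides `u`. -/
def SVan (S : Set (PathIn V)) (q p : PathIn V) : Prop :=
  ∃ u : PathIn V, q.tgt = u.src ∧ p = q.comp u ∧ ∀ s ∈ S, ¬ Div s u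

/-- `q` almost `S`-vanishes `p` (written `q ∣_S^a p`): `p = q u`, `q` does not `S`-vanish `p`,
and for every factorization `u = u₁ u₂` with `u₂` of positive length, `q` `S`-vanishes `q u₁`. -/
def ASVan (S : Set (PathIn V)) (q p : PathIn V) : Prop :=
  ∃ u : PathIn V, q.tgt = u.src ∧ p = q.comp u ∧ ¬ SVan S q p ∧
    ∀ u₁ u₂ : PathIn V, u₁.tgt = u₂.src → u = u₁.comp u₂ → 0 < u₂.len →
      SVan S q (q.comp u₁)

/-- The set of `n`-overlaps of a set of paths `S`. -/
def Overlaps (S : Set (PathIn V)) : ℕ → Set (PathIn V)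
  | 0 => {p | p.len = 1}
  | 1 => S
  | (n + 2) => {w | ∃ w₁ ∈ Overlaps S (n + 1), ∃ w₂ ∈ Overlaps S n,
      SVan S w₁ w ∧ ASVan S w₂ w}

/-- The set of `n`-quasioverlaps of a set of paths `S`: pairs `(w, v)` with `v` of
positive length. -/
def QOverlaps (S : Set (PathIn V)) : ℕ → Set (PathIn V × PathIn V)
  | 0 => {wv | wv.1.len = 0 ∧ 0 < wv.2.len ∧ wv.2.tgt = wv.1.src}
  | 1 => {wv | 0 < wv.1.len ∧ 0 < wv.2.len ∧ wv.2.tgt = wv.1.src ∧ wv.2.comp wv.1 ∈ S}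
  | (n + 2) => {wv | ∃ w₁, (w₁, wv.2) ∈ QOverlaps S (n + 1) ∧
      ∃ w₂, (w₂, wv.2) ∈ QOverlaps S n ∧ SVan S w₁ wv.1 ∧ ASVan S w₂ wv.1}

/-- `sup` of the lengths of the `n`-overlaps of `S`, in `EReal` (`-∞` if there are none). -/
noncomputable def maxo (S : Set (PathIn V)) (n : ℕ) : EReal :=
  sSup ((fun w => (w.len : EReal)) '' Overlaps S n)

/-- `inf` of the lengths of the `n`-overlaps of `S`, in `EReal` (`+∞` if there are none). -/
noncomputable def mino (S : Set (PathIn V)) (n : ℕ) : EReal :=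
  sInf ((fun w => (w.len : EReal)) '' Overlaps S n)

/-- `sup` of the lengths of the first components of `n`-quasioverlaps of `S`. -/
noncomputable def maxqo (S : Set (PathIn V)) (n : ℕ) : EReal :=
  sSup ((fun w => (w.len : EReal)) '' {w | ∃ v, (w, v) ∈ QOverlaps S n})

/-- `inf` of the lengths of the first components of `n`-quasioverlaps of `S`. -/
noncomputable def minqo (S : Set (PathIn V)) (n : ℕ) : EReal :=
  sInf ((fun w => (w.len : EReal)) '' {w | ∃ v, (w, v) ∈ QOverlaps S n})

end PathIn

namespace Aux

variable {V : Type u} [Quiver.{v + 1} V]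

/-- The list of arrows of a path. -/
def pl : ∀ {a b : V}, Quiver.Path a b → List (Σ x y : V, x ⟶ y)
  | _, _, .nil => []
  | _, _, .cons p e => pl p ++ [⟨_, _, e⟩]

lemma pl_length {a b : V} (p : Quiver.Path a b) : (pl p).length = p.length := by
  induction p with
  | nil => simp [pl]
  | cons p e ih => simp [pl, ih]

lemma pl_cast {a b a' b' : V} (h : a = a') (h' : b = b') (p : Quiver.Path a b) :
    pl (p.cast h h') = pl p := by
  subst h; subst h'; rw [Quiver.Path.cast_rfl_rfl]

lemma pl_comp {a b c : V} (p : Quiver.Path a b) (q : Quiver.Path b c) :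
    pl (p.comp q) = pl p ++ pl q := by
  induction q with
  | nil => simp [pl]
  | cons q e ih => simp [pl, Quiver.Path.comp_cons, ih]

lemma pl_inj {a b c : V} (p : Quiver.Path a b) (q : Quiver.Path a c)
    (h : pl p = pl q) : b = c ∧ HEq p q := by
  induction p generalizing c q with
  | nil =>
    cases q with
    | nil => exact ⟨rfl, HEq.rfl⟩
    | cons q e => simp [pl] at h
  | cons p e ih =>
    cases q with
    | nil => simp [pl] at h
    | cons q f =>
      simp only [pl] at h
      obtain ⟨h1, h2⟩ := List.append_inj' h rfl
      simp only [List.cons.injEq, and_true] at h2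
      obtain ⟨hm, hh⟩ := ih q h1
      subst hm
      have h4 : (⟨_, e⟩ : Σ y : V, _ ⟶ y) = ⟨_, f⟩ := eq_of_heq (Sigma.mk.inj_iff.mp h2).2
      obtain ⟨hb, he⟩ := Sigma.ext_iff.mp h4
      dsimp at hb he
      subst hb
      rw [eq_of_heq hh, eq_of_heq he]
      exact ⟨rfl, HEq.rfl⟩

lemma pl_split {a c : V} (q : Quiver.Path a c) (l₁ l₂ : List (Σ x y : V, x ⟶ y))
    (h : pl q = l₁ ++ l₂) :
    ∃ (b : V) (p : Quiver.Path a b) (r : Quiver.Path b c),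
      q = p.comp r ∧ pl p = l₁ ∧ pl r = l₂ := by
  induction q generalizing l₁ l₂ with
  | nil =>
    simp only [pl] at h
    obtain ⟨h1, h2⟩ := List.append_eq_nil_iff.mp h.symm
    exact ⟨a, .nil, .nil, rfl, by simp [pl, h1], by simp [pl, h2]⟩
  | cons q e ih =>
    rcases l₂.eq_nil_or_concat with rfl | ⟨l₂', x, rfl⟩
    · exact ⟨_, q.cons e, .nil, rfl, by simpa using h, by simp [pl]⟩
    · simp only [pl, List.concat_eq_append] at h
      rw [← List.append_assoc] at h
      obtain ⟨h1, h2⟩ := List.append_inj' h rfl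
      obtain ⟨b, p, r, rfl, hp, hr⟩ := ih l₁ l₂' h1
      refine ⟨b, p, r.cons e, rfl, hp, ?_⟩
      simp only [List.cons.injEq, and_true] at h2
      simp [pl, hr, h2, List.concat_eq_append]


open PathIn

lemma comp_def {p q : PathIn V} (h : p.tgt = q.src) :
    p.comp q = ⟨p.1, q.2.1, p.2.2.comp (q.2.2.cast h.symm rfl)⟩ := dif_pos h

/-- The list of arrows of a bundled path. -/
def plb (p : PathIn V) : List (Σ x y : V, x ⟶ y) := pl p.2.2

lemma plb_comp {p q : PathIn V} (h : p.tgt = q.src) :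
    plb (p.comp q) = plb p ++ plb q := by
  rw [comp_def h]; unfold plb; simp [pl_comp, pl_cast]; exact pl_cast _ _ _

lemma src_comp {p q : PathIn V} (h : p.tgt = q.src) : (p.comp q).1 = p.1 := by
  rw [comp_def h]

lemma len_plb (p : PathIn V) : p.len = (plb p).length := (pl_length _).symm

lemma ext_plb {p q : PathIn V} (h1 : p.1 = q.1) (h2 : plb p = plb q) : p = q := by
  obtain ⟨a, b, pp⟩ := p; obtain ⟨a', c, qq⟩ := q
  dsimp at h1; subst h1
  obtain ⟨hb, hh⟩ := pl_inj pp qq h2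
  subst hb; rw [eq_of_heq hh]

lemma ldiv_iff {p q : PathIn V} : LDiv p q ↔ p.1 = q.1 ∧ plb p <+: plb q := by
  constructor
  · rintro ⟨v, hv, rfl⟩
    exact ⟨(src_comp hv).symm, plb v, (plb_comp hv).symm⟩
  · rintro ⟨h1, l₂, h2⟩
    obtain ⟨a, c, qq⟩ := q
    obtain ⟨a', b, pp⟩ := p
    dsimp at h1; subst h1
    obtain ⟨b', p', r, hsplit, hpl, hrl⟩ := pl_split qq (pl pp) l₂ h2.symm
    obtain ⟨hb, hh⟩ := pl_inj p' pp hpl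
    subst hb
    have hpe : p' = pp := eq_of_heq hh
    subst hpe
    refine ⟨⟨b', c, r⟩, rfl, ?_⟩
    rw [comp_def (show PathIn.tgt ⟨a', b', p'⟩ = PathIn.src ⟨b', c, r⟩ from rfl)]
    refine Sigma.ext rfl (heq_of_eq (Sigma.ext rfl (heq_of_eq ?_)))
    show qq = p'.comp (r.cast rfl rfl)
    rw [Quiver.Path.cast_rfl_rfl, hsplit]

lemma ldiv_trans {p q r : PathIn V} (h1 : LDiv p q) (h2 : LDiv q r) : LDiv p r := by
  rw [ldiv_iff] at *
  exact ⟨h1.1.trans h2.1, h1.2.trans h2.2⟩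

lemma ldiv_total {p q w : PathIn V} (h1 : LDiv p w) (h2 : LDiv q w) :
    LDiv p q ∨ LDiv q p := by
  simp only [ldiv_iff] at h1 h2 ⊢
  rcases List.prefix_or_prefix_of_prefix h1.2 h2.2 with h | h
  · exact Or.inl ⟨h1.1.trans h2.1.symm, h⟩
  · exact Or.inr ⟨h2.1.trans h1.1.symm, h⟩

lemma ldiv_cancel {r u u' p q : PathIn V} (hu : r.tgt = u.src) (hu' : r.tgt = u'.src)
    (hp : p = r.comp u) (hq : q = r.comp u') (h : LDiv p q) : LDiv u u' := by
  subst hp; subst hq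
  rw [ldiv_iff] at h ⊢
  refine ⟨hu.symm.trans hu', ?_⟩
  rw [plb_comp hu, plb_comp hu'] at h
  exact (List.prefix_append_right_inj _).mp h.2

lemma len_comp {p q : PathIn V} (h : p.tgt = q.src) :
    (p.comp q).len = p.len + q.len := by
  simp [len_plb, plb_comp h]

lemma vert_comp (p : PathIn V) : (vert p.src).comp p = p := by
  obtain ⟨a, b, pp⟩ := p
  show (vert a).comp ⟨a, b, pp⟩ = ⟨a, b, pp⟩
  rw [comp_def (show PathIn.tgt (vert a) = PathIn.src ⟨a, b, pp⟩ from rfl)]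
  refine Sigma.ext rfl (heq_of_eq (Sigma.ext rfl (heq_of_eq ?_)))
  show Quiver.Path.nil.comp (pp.cast rfl rfl) = pp
  rw [Quiver.Path.cast_rfl_rfl, Quiver.Path.nil_comp]

lemma ldiv_div {p q : PathIn V} (h : LDiv p q) : Div p q := by
  obtain ⟨v, hv, rfl⟩ := h
  exact ⟨vert p.src, v, rfl, hv, by rw [vert_comp]⟩

lemma key (S : Set (PathIn V)) (hred : Reduced S) :
    ∀ m, ∀ p ∈ Overlaps S m, ∀ q ∈ Overlaps S m, LDiv p q → p = q := by
  intro m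
  induction m using Nat.strong_induction_on with
  | _ m ih =>
    match m with
    | 0 =>
      intro p hp q hq h
      rw [ldiv_iff] at h
      refine ext_plb h.1 (h.2.eq_of_length ?_)
      have hp' : p.len = 1 := hp
      have hq' : q.len = 1 := hq
      rw [← len_plb, ← len_plb, hp', hq']
    | 1 =>
      intro p hp q hq h
      by_contra hne
      exact hred q hq p hp hne (ldiv_div h)
    | (k+2) =>
      intro p hp q hq h
      obtain ⟨p₁, hp₁, p₂, hp₂, hpv, hpa⟩ := hp
      obtain ⟨q₁, hq₁, q₂, hq₂, hqv, hqa⟩ := hq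
      obtain ⟨u, hu, hpu, hnp, -⟩ := hpa
      obtain ⟨u', hu', hqu, -, hmin⟩ := hqa
      have h2 : p₂ = q₂ := by
        have l1 : LDiv p₂ q := ldiv_trans ⟨u, hu, hpu⟩ h
        have l2 : LDiv q₂ q := ⟨u', hu', hqu⟩
        rcases ldiv_total l1 l2 with hh | hh
        · exact ih k (by omega) p₂ hp₂ q₂ hq₂ hh
        · exact (ih k (by omega) q₂ hq₂ p₂ hp₂ hh).symm
      subst h2
      obtain ⟨u₂, hu₂, rfl⟩ := ldiv_cancel hu hu' hpu hqu h
      by_contra hne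
      have hlen : 0 < u₂.len := by
        rcases Nat.eq_zero_or_pos u₂.len with hz | hpos
        · exfalso
          apply hne
          rw [ldiv_iff] at h
          refine ext_plb h.1 (h.2.eq_of_length ?_)
          have hle : p.len = q.len := by
            rw [hpu, hqu, len_comp hu, len_comp hu', len_comp hu₂, hz]
            omega
          rw [← len_plb, ← len_plb, hle]
        · exact hpos
      have hsv := hmin u u₂ hu₂ rfl hlen
      rw [← hpu] at hsv
      exact hnp hsv

end Aux


/-- if `w` is an `n`-overlap for a reduced set of paths `S` (`n ≥ 1`), there is a
unique path `w'` dividing `w` on the left which is an `(n-1)`-overlap for `S`. -/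
theorem unique_left_divisor_overlap {V : Type u} [Quiver.{v + 1} V]
    [Fintype V] [∀ a b : V, Fintype (a ⟶ b)]
    (S : Set (PathIn V)) (hS : ∀ p ∈ S, 2 ≤ p.len) (hred : PathIn.Reduced S)
    (n : ℕ) (hn : 1 ≤ n) (w : PathIn V) (hw : w ∈ PathIn.Overlaps S n) :
    ∃! w' : PathIn V, PathIn.LDiv w' w ∧ w' ∈ PathIn.Overlaps S (n - 1) := by
  have hex : ∃ w', PathIn.LDiv w' w ∧ w' ∈ PathIn.Overlaps S (n - 1) := by
    obtain _ | n' := n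
    · omega
    obtain _ | k := n'
    · -- n = 1
      have hw' : w ∈ S := hw
      have hlen : 2 ≤ w.len := hS w hw'
      have hsplit : Aux.pl w.2.2 = (Aux.plb w).take 1 ++ (Aux.plb w).drop 1 :=
        (List.take_append_drop 1 (Aux.plb w)).symm
      obtain ⟨b, p, r, hcomp, hpl, hrl⟩ := Aux.pl_split w.2.2 _ _ hsplit
      refine ⟨⟨w.1, b, p⟩, ?_, ?_⟩
      · rw [Aux.ldiv_iff]
        refine ⟨rfl, ?_⟩
        show Aux.pl p <+: Aux.plb w
        rw [hpl]
        exact List.take_prefix 1 _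
      · show PathIn.len ⟨w.1, b, p⟩ = 1
        rw [Aux.len_plb]
        show (Aux.pl p).length = 1
        rw [hpl, List.length_take]
        rw [Aux.len_plb] at hlen
        omega
    · -- n = k + 2
      obtain ⟨w₁, hw₁, w₂, hw₂, hv, ha⟩ := hw
      obtain ⟨u, hu, hwu, -⟩ := hv
      exact ⟨w₁, ⟨u, hu, hwu⟩, hw₁⟩
  obtain ⟨w', hd, hm⟩ := hex
  refine ⟨w', ⟨hd, hm⟩, ?_⟩
  rintro y ⟨hyd, hym⟩
  rcases Aux.ldiv_total hyd hd with hh | hh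
  · exact Aux.key S hred (n - 1) y hym w' hm hh
  · exact (Aux.key S hred (n - 1) w' hm y hym hh).symm
end

section
/- Let Q be a finite quiver, S a reduced set of paths of length at least 2, and n ≥ 1. If (w, v) is an n-quasioverlap for S, then there exists a unique path w' such that w' is a left divisor of w and (w', v) is an (n−1)-quasioverlap for S. -/
universe u v

/-! ### Auxiliary infrastructure: the list of arrows of a path -/

namespace PathIn

variable {V : Type u} [Quiver.{v + 1} V]

/-- The list of arrows of a raw path. -/
def pl : ∀ {a b : V}, Quiver.Path a b → List (Σ a b : V, a ⟶ b)
  | _, _, Quiver.Path.nil => []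
  | _, _, Quiver.Path.cons p e => pl p ++ [⟨_, _, e⟩]

@[simp] theorem pl_nil {a : V} : pl (Quiver.Path.nil : Quiver.Path a a) = [] := by
  simp [pl]

@[simp] theorem pl_cons {a b c : V} (p : Quiver.Path a b) (e : b ⟶ c) :
    pl (p.cons e) = pl p ++ [⟨b, c, e⟩] := by
  simp [pl]

theorem pl_length {a b : V} (p : Quiver.Path a b) : (pl p).length = p.length := by
  induction p with
  | nil => simp
  | cons p e ih => simp [ih]

theorem pl_comp {a b c : V} (p : Quiver.Path a b) (q : Quiver.Path b c) :
    pl (p.comp q) = pl p ++ pl q := by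
  induction q with
  | nil => simp
  | cons q e ih => simp [ih]

theorem pl_cast {a b a' b' : V} (h1 : a = a') (h2 : b = b') (p : Quiver.Path a b) :
    pl (p.cast h1 h2) = pl p := by
  subst h1; subst h2; rw [Quiver.Path.cast_rfl_rfl]

theorem pl_inj {a : V} : ∀ {b c : V} (p : Quiver.Path a b) (q : Quiver.Path a c),
    pl p = pl q → b = c ∧ HEq p q := by
  intro b c p q h
  induction p generalizing c with
  | nil =>
    cases q with
    | nil => exact ⟨rfl, HEq.rfl⟩
    | cons q' f => simp at h
  | cons p' e ih =>
    cases q with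
    | nil => simp at h
    | cons q' f =>
      simp only [pl_cons] at h
      obtain ⟨hl, hr⟩ := List.append_inj' h rfl
      obtain ⟨hbc, hpq⟩ := ih q' hl
      subst hbc
      rw [heq_eq_eq] at hpq
      subst hpq
      injection hr with hx _
      injection hx with h1 h2
      injection h2 with h3 h4
      subst h3
      rw [heq_eq_eq] at h4
      subst h4
      exact ⟨rfl, HEq.rfl⟩

/-- The list of arrows of a bundled path. -/
def list (p : PathIn V) : List (Σ a b : V, a ⟶ b) := pl p.2.2

theorem length_list (p : PathIn V) : p.list.length = p.len := pl_length _

theorem ext' (p q : PathIn V) (h1 : p.src = q.src) (h2 : p.list = q.list) : p = q := by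
  obtain ⟨a, b, P⟩ := p
  obtain ⟨a', b', Q⟩ := q
  have ha : a = a' := h1
  subst ha
  obtain ⟨hb, hPQ⟩ := pl_inj P Q h2
  subst hb
  rw [heq_eq_eq] at hPQ
  subst hPQ
  rfl

@[simp] theorem src_vert (a : V) : (vert a).src = a := rfl
@[simp] theorem tgt_vert (a : V) : (vert a).tgt = a := rfl
@[simp] theorem len_vert (a : V) : (vert a).len = 0 := rfl
@[simp] theorem list_vert (a : V) : (vert a).list = [] := by
  show pl Quiver.Path.nil = []
  simp

@[simp] theorem src_comp (p q : PathIn V) : (p.comp q).src = p.src := by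
  unfold comp; split <;> rfl

theorem tgt_comp {p q : PathIn V} (h : p.tgt = q.src) : (p.comp q).tgt = q.tgt := by
  unfold comp; rw [dif_pos h]; rfl

theorem list_comp {p q : PathIn V} (h : p.tgt = q.src) :
    (p.comp q).list = p.list ++ q.list := by
  unfold comp; rw [dif_pos h]
  show pl (p.2.2.comp _) = _
  rw [pl_comp]
  exact congrArg (pl p.2.2 ++ ·) (pl_cast _ _ _)

theorem len_comp {p q : PathIn V} (h : p.tgt = q.src) :
    (p.comp q).len = p.len + q.len := by
  rw [← length_list, list_comp h, List.length_append, length_list, length_list]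

theorem eq_vert_of_len_zero {p : PathIn V} (h : p.len = 0) : p = vert p.src := by
  refine ext' p (vert p.src) rfl ?_
  rw [list_vert, ← List.length_eq_zero_iff, length_list, h]

theorem comp_vert (p : PathIn V) : p.comp (vert p.tgt) = p := by
  refine ext' (p.comp (vert p.tgt)) p (src_comp _ _) ?_
  rw [list_comp (q := vert p.tgt) rfl, list_vert, List.append_nil]

theorem vert_comp (p : PathIn V) : (vert p.src).comp p = p := by
  refine ext' ((vert p.src).comp p) p (src_comp _ _) ?_
  rw [list_comp (p := vert p.src) rfl, list_vert, List.nil_append]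

theorem pl_split {a b : V} (P : Quiver.Path a b) :
    ∀ (l₁ l₂ : List (Σ a b : V, a ⟶ b)), pl P = l₁ ++ l₂ →
    ∃ (c : V) (P₁ : Quiver.Path a c) (P₂ : Quiver.Path c b),
      P = P₁.comp P₂ ∧ pl P₁ = l₁ ∧ pl P₂ = l₂ := by
  induction P with
  | nil =>
    intro l₁ l₂ h
    rw [pl_nil] at h
    obtain ⟨h1, h2⟩ := List.append_eq_nil_iff.mp h.symm
    exact ⟨a, Quiver.Path.nil, Quiver.Path.nil, rfl, by simp [h1], by simp [h2]⟩
  | @cons m b' P' e ih =>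
    intro l₁ l₂ h
    rcases List.eq_nil_or_concat l₂ with rfl | ⟨l₂', x, rfl⟩
    · exact ⟨b', P'.cons e, Quiver.Path.nil, (Quiver.Path.comp_nil _).symm,
        by simpa using h, by simp⟩
    · rw [pl_cons, List.concat_eq_append, ← List.append_assoc] at h
      obtain ⟨hl, hr⟩ := List.append_inj' h rfl
      obtain ⟨c, P₁, P₂, hc, h1, h2⟩ := ih l₁ l₂' hl
      refine ⟨c, P₁, P₂.cons e, by rw [hc]; rfl, h1, ?_⟩
      rw [pl_cons, h2, List.concat_eq_append,
        (List.cons.injEq _ _ _ _).mp hr |>.1]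

theorem exists_split (p : PathIn V) (l₁ l₂ : List (Σ a b : V, a ⟶ b))
    (h : p.list = l₁ ++ l₂) :
    ∃ p₁ p₂ : PathIn V, p₁.src = p.src ∧ p₁.tgt = p₂.src ∧
      p = p₁.comp p₂ ∧ p₁.list = l₁ ∧ p₂.list = l₂ := by
  obtain ⟨a, b, P⟩ := p
  obtain ⟨c, P₁, P₂, hc, h1, h2⟩ := pl_split P l₁ l₂ h
  refine ⟨⟨a, c, P₁⟩, ⟨c, b, P₂⟩, rfl, rfl, ?_, h1, h2⟩
  refine ext' ⟨a, b, P⟩ (comp ⟨a, c, P₁⟩ ⟨c, b, P₂⟩) (src_comp ⟨a, c, P₁⟩ ⟨c, b, P₂⟩).symm ?_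
  show pl P = (comp _ _).list
  rw [list_comp (p := (⟨a, c, P₁⟩ : PathIn V)) (q := (⟨c, b, P₂⟩ : PathIn V)) rfl,
    hc, pl_comp]
  rfl

theorem comp_assoc {p q r : PathIn V} (h1 : p.tgt = q.src) (h2 : q.tgt = r.src) :
    (p.comp q).comp r = p.comp (q.comp r) := by
  refine ext' _ _ ?_ ?_
  · rw [src_comp, src_comp, src_comp]
  · rw [list_comp (show (p.comp q).tgt = r.src by rw [tgt_comp h1]; exact h2),
      list_comp h1,
      list_comp (show p.tgt = (q.comp r).src by rw [src_comp]; exact h1),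
      list_comp h2, List.append_assoc]

theorem cancel_left {p q q' : PathIn V} (h : p.tgt = q.src) (h' : p.tgt = q'.src)
    (e : p.comp q = p.comp q') : q = q' := by
  refine ext' q q' (h.symm.trans h') ?_
  have := congrArg list e
  rw [list_comp h, list_comp h'] at this
  exact List.append_cancel_left this

theorem list_ne_nil_of_pos {p : PathIn V} (h : 0 < p.len) : p.list ≠ [] := by
  intro hc
  rw [← length_list, hc] at h
  simp at h

theorem pl_head? {a b : V} (P : Quiver.Path a b) :
    ∀ x, (pl P).head? = some x → x.1 = a := by
  induction P with
  | nil => intro x h; simp at h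
  | @cons m b' P' e ih =>
    intro x h
    rw [pl_cons] at h
    rcases hP : pl P' with _ | ⟨y, t⟩
    · rw [hP] at h
      simp only [List.nil_append, List.head?_cons, Option.some.injEq] at h
      obtain ⟨hm, -⟩ := pl_inj P' Quiver.Path.nil (by rw [hP, pl_nil])
      rw [← h]
      exact hm
    · rw [hP] at h
      simp only [List.cons_append, List.head?_cons, Option.some.injEq] at h
      rw [← h]
      exact ih y (by rw [hP]; rfl)

theorem src_eq_of_list_eq {p q : PathIn V} (h : p.list = q.list) (hne : p.list ≠ []) :
    p.src = q.src := by
  obtain ⟨a, b, P⟩ := p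
  obtain ⟨a', b', Q⟩ := q
  rcases e : pl P with _ | ⟨x, t⟩
  · exact absurd e hne
  · have h1 : x.1 = a := pl_head? P x (by rw [e]; rfl)
    have hQ : pl Q = x :: t := (show pl P = pl Q from h).symm.trans e
    have h2 : x.1 = a' := pl_head? Q x (by rw [hQ]; rfl)
    exact h1.symm.trans h2

theorem LDiv_iff {p q : PathIn V} : LDiv p q ↔ p.src = q.src ∧ p.list <+: q.list := by
  constructor
  · rintro ⟨u, h, rfl⟩
    exact ⟨(src_comp p u).symm, by rw [list_comp h]; exact List.prefix_append _ _⟩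
  · rintro ⟨hsrc, r, hr⟩
    obtain ⟨p₁, p₂, hs, ht, hc, h1, h2⟩ := exists_split q p.list r hr.symm
    have he : p₁ = p := ext' p₁ p (hs.trans hsrc.symm) h1
    subst he
    exact ⟨p₂, ht, hc⟩

theorem LDiv.src_eq {p q : PathIn V} (h : LDiv p q) : p.src = q.src :=
  (LDiv_iff.mp h).1

theorem LDiv.trans' {p q r : PathIn V} (h1 : LDiv p q) (h2 : LDiv q r) : LDiv p r :=
  LDiv_iff.mpr ⟨h1.src_eq.trans h2.src_eq, (LDiv_iff.mp h1).2.trans (LDiv_iff.mp h2).2⟩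

theorem ldiv_total {p q x : PathIn V} (h1 : LDiv p x) (h2 : LDiv q x) :
    LDiv p q ∨ LDiv q p := by
  rw [LDiv_iff] at h1 h2 ⊢
  rw [LDiv_iff (p := q) (q := p)]
  have hsrc : p.src = q.src := h1.1.trans h2.1.symm
  rcases List.prefix_or_prefix_of_prefix h1.2 h2.2 with h | h
  · exact Or.inl ⟨hsrc, h⟩
  · exact Or.inr ⟨hsrc.symm, h⟩

theorem LDiv.div {p q : PathIn V} (h : LDiv p q) : Div p q := by
  obtain ⟨u, hu, rfl⟩ := h
  exact ⟨vert p.src, u, rfl, hu, by rw [vert_comp]⟩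

theorem div_iff_infix {s q : PathIn V} (hs : s.list ≠ []) :
    Div s q ↔ s.list <:+: q.list := by
  constructor
  · rintro ⟨u, x, hu, hx, rfl⟩
    refine ⟨u.list, x.list, ?_⟩
    rw [list_comp (show (u.comp s).tgt = x.src by rw [tgt_comp hu]; exact hx),
      list_comp hu]
  · rintro ⟨l₁, l₂, hl⟩
    obtain ⟨u, r, hus, hut, hqc, hul, hrl⟩ := exists_split q l₁ (s.list ++ l₂)
      (by rw [← hl]; simp [List.append_assoc])
    obtain ⟨s', x, hss, hst, hrc, hsl, hxl⟩ := exists_split r s.list l₂ hrl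
    have he : s' = s := ext' s' s (src_eq_of_list_eq hsl (hsl ▸ hs)) hsl
    subst he
    refine ⟨u, x, hut.trans hss.symm, hst, ?_⟩
    rw [hqc, hrc, comp_assoc (hut.trans hss.symm) hst]

theorem SVan.ldiv {S : Set (PathIn V)} {q p : PathIn V} (h : SVan S q p) : LDiv q p := by
  obtain ⟨u, h1, h2, -⟩ := h
  exact ⟨u, h1, h2⟩

theorem not_svan_exists {S : Set (PathIn V)} {q u : PathIn V} (h : q.tgt = u.src)
    (hn : ¬ SVan S q (q.comp u)) : ∃ s ∈ S, Div s u := by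
  by_contra hc
  push_neg at hc
  exact hn ⟨u, h, rfl, hc⟩

/-- If `t` `S`-vanishes `A` and `p` almost `S`-vanishes `A`, then `p` left-divides `t`. -/
theorem asvan_ldiv_svan {S : Set (PathIn V)} (hS : ∀ p ∈ S, 2 ≤ p.len)
    {t p A : PathIn V} (hsv : SVan S t A) (hasv : ASVan S p A) : LDiv p t := by
  obtain ⟨c, hc1, hc2, hcfree⟩ := hsv
  obtain ⟨fA, hfA1, hfA2, hnsvA, -⟩ := hasv
  obtain ⟨s, hsS, hsfA⟩ := not_svan_exists hfA1 (hfA2 ▸ hnsvA)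
  rcases ldiv_total ⟨fA, hfA1, hfA2⟩ ⟨c, hc1, hc2⟩ with h | h
  · exact h
  · exfalso
    obtain ⟨x, hx1, hx2⟩ := h
    have hxt : x.tgt = fA.src := by rw [← hfA1, hx2, tgt_comp hx1]
    have hassoc : A = t.comp (x.comp fA) := by
      rw [hfA2, hx2, comp_assoc hx1 hxt]
    have hcx : c = x.comp fA := cancel_left hc1
      (show t.tgt = (x.comp fA).src by rw [src_comp]; exact hx1)
      (hc2.symm.trans hassoc)
    have hsnil : s.list ≠ [] := list_ne_nil_of_pos (by have := hS s hsS; omega)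
    refine hcfree s hsS ?_
    rw [div_iff_infix hsnil] at hsfA ⊢
    rw [hcx, list_comp hxt]
    exact hsfA.trans (List.suffix_append x.list fA.list).isInfix

theorem mem_qo_zero {S : Set (PathIn V)} {w v : PathIn V} :
    (w, v) ∈ QOverlaps S 0 ↔ w.len = 0 ∧ 0 < v.len ∧ v.tgt = w.src := Iff.rfl

theorem mem_qo_one {S : Set (PathIn V)} {w v : PathIn V} :
    (w, v) ∈ QOverlaps S 1 ↔
      0 < w.len ∧ 0 < v.len ∧ v.tgt = w.src ∧ v.comp w ∈ S := Iff.rfl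

theorem mem_qo_succ_succ {S : Set (PathIn V)} {k : ℕ} {w v : PathIn V} :
    (w, v) ∈ QOverlaps S (k + 2) ↔ ∃ w₁, (w₁, v) ∈ QOverlaps S (k + 1) ∧
      ∃ w₂, (w₂, v) ∈ QOverlaps S k ∧ SVan S w₁ w ∧ ASVan S w₂ w := Iff.rfl

theorem key (S : Set (PathIn V)) (hS : ∀ p ∈ S, 2 ≤ p.len) (hred : Reduced S) :
    ∀ n, ∀ w v : PathIn V, (w, v) ∈ QOverlaps S (n + 1) →
      ∃! w' : PathIn V, LDiv w' w ∧ (w', v) ∈ QOverlaps S n := by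
  intro n
  induction n using Nat.strong_induction_on with
  | _ n IH =>
  rcases n with _ | m
  · -- n = 0 : (w,v) ∈ QO 1
    intro w v hw
    obtain ⟨hw1, hv1, hvt, hvS⟩ := mem_qo_one.mp hw
    refine ⟨vert w.src, ⟨⟨w, rfl, (vert_comp w).symm⟩,
      mem_qo_zero.mpr ⟨rfl, hv1, by simpa using hvt⟩⟩, ?_⟩
    rintro y ⟨hy1, hy2⟩
    obtain ⟨hlen, -, -⟩ := mem_qo_zero.mp hy2
    rw [eq_vert_of_len_zero hlen, hy1.src_eq]
  · -- n = m + 1 : (w,v) ∈ QO (m+2)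
    intro w v hw
    obtain ⟨w₁, h1, w₂, h2, hsv, hasv⟩ := mem_qo_succ_succ.mp hw
    have main : ∀ A B : PathIn V, (A, v) ∈ QOverlaps S (m + 1) →
        (B, v) ∈ QOverlaps S (m + 1) → LDiv A B → A = B := by
      intro A B hA hB hAB
      rcases m with _ | k
      · -- QO 1 case
        obtain ⟨hA1, hv1, hvtA, hAS⟩ := mem_qo_one.mp hA
        obtain ⟨hB1, -, hvtB, hBS⟩ := mem_qo_one.mp hB
        have hld : LDiv (v.comp A) (v.comp B) := by
          rw [LDiv_iff]
          refine ⟨by rw [src_comp, src_comp], ?_⟩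
          rw [list_comp hvtA, list_comp hvtB]
          obtain ⟨r, hr⟩ := (LDiv_iff.mp hAB).2
          exact ⟨r, by rw [← hr, List.append_assoc]⟩
        have hvAB : v.comp A = v.comp B := by
          by_contra hne
          exact hred (v.comp B) hBS (v.comp A) hAS hne hld.div
        exact cancel_left hvtA hvtB hvAB
      · -- QO (k+2) case
        obtain ⟨tA, htA, pA, hpA, hsvA, hasvA⟩ := mem_qo_succ_succ.mp hA
        obtain ⟨tB, htB, pB, hpB, hsvB, hasvB⟩ := mem_qo_succ_succ.mp hB
        -- tA = tB via IH (k+1)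
        obtain ⟨t0, -, huniq⟩ := IH (k + 1) (by omega) B v hB
        have htAB : tA = tB := by
          rw [huniq tA ⟨hsvA.ldiv.trans' hAB, htA⟩, huniq tB ⟨hsvB.ldiv, htB⟩]
        subst htAB
        -- pA and pB both left-divide tA
        have hpAl : LDiv pA tA := asvan_ldiv_svan hS hsvA hasvA
        have hpBl : LDiv pB tA := asvan_ldiv_svan hS hsvB hasvB
        -- pA = pB
        have hpeq : pA = pB := by
          rcases k with _ | j
          · obtain ⟨hlenA, -, -⟩ := mem_qo_zero.mp hpA
            obtain ⟨hlenB, -, -⟩ := mem_qo_zero.mp hpB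
            rw [eq_vert_of_len_zero hlenA, eq_vert_of_len_zero hlenB,
              hpAl.src_eq, hpBl.src_eq]
          · obtain ⟨p0, -, puniq⟩ := IH (j + 1) (by omega) tA v htA
            rw [puniq pA ⟨hpAl, hpA⟩, puniq pB ⟨hpBl, hpB⟩]
        subst hpeq
        -- final step
        obtain ⟨fA, hfA1, hfA2, hnsvA, -⟩ := hasvA
        obtain ⟨fB, hfB1, hfB2, hnsvB, hallB⟩ := hasvB
        obtain ⟨h, hh1, hh2⟩ := hAB
        by_cases hh0 : h.len = 0
        · have : h = vert A.tgt := by rw [eq_vert_of_len_zero hh0, ← hh1]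
          rw [hh2, this, comp_vert]
        · exfalso
          have hpos : 0 < h.len := Nat.pos_of_ne_zero hh0
          have hfAt : fA.tgt = h.src := by rw [← hh1, hfA2, tgt_comp hfA1]
          have hBdec : B = pA.comp (fA.comp h) := by
            rw [hh2, hfA2, comp_assoc hfA1 hfAt]
          have hfBeq : fB = fA.comp h := cancel_left hfB1
            (show pA.tgt = (fA.comp h).src by rw [src_comp]; exact hfA1)
            (hfB2.symm.trans hBdec)
          have hcontra := hallB fA h hfAt hfBeq hpos
          rw [← hfA2] at hcontra
          exact hnsvA hcontra
    refine ⟨w₁, ⟨hsv.ldiv, h1⟩, ?_⟩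
    rintro y ⟨hyw, hy⟩
    rcases ldiv_total hyw hsv.ldiv with h | h
    · exact main y w₁ hy h1 h
    · exact (main w₁ y h1 hy h).symm

end PathIn

/-- if `(w, v)` is an `n`-quasioverlap for a reduced set of paths `S` (`n ≥ 1`),
there is a unique path `w'` dividing `w` on the left such that `(w', v)` is an
`(n-1)`-quasioverlap for `S`. -/
theorem unique_left_divisor_quasioverlap {V : Type u} [Quiver.{v + 1} V]
    [Fintype V] [∀ a b : V, Fintype (a ⟶ b)]
    (S : Set (PathIn V)) (hS : ∀ p ∈ S, 2 ≤ p.len) (hred : PathIn.Reduced S)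
    (n : ℕ) (hn : 1 ≤ n) (w v : PathIn V) (hw : (w, v) ∈ PathIn.QOverlaps S n) :
    ∃! w' : PathIn V, PathIn.LDiv w' w ∧ (w', v) ∈ PathIn.QOverlaps S (n - 1) := by
  rcases n with _ | m
  · omega
  · simpa using PathIn.key S hS hred m w v hw
end

section
/- Let S be a reduced set of paths of length at least 2 in a finite quiver Q and let n ≥ 1. For a path w and a path v₀ of positive length, the pair (w, v₀) belongs to QO_n(S) if and only if w can be written as w = u₁v₁u₂⋯u_{n−1}v_{n−1}u_nv_n where u₁,…,u_n are paths, v₁,…,v_{n−1} have positive length, v_n is a vertex, such that: (1) v_{i−1}u_iv_i ∈ S for 1 ≤ i ≤ n; (2) for 1 ≤ i ≤ n−1 there are no paths u, v of positive length with vv_iu ∈ S, u a left divisor of u_{i+1}v_{i+1}, and v a right divisor of u_i; and (3) u₁ has positive length if n = 1. -/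
universe u v

namespace PathIn

variable {V : Type u} [Quiver.{v + 1} V]

/-- Composition of the sequence of paths `p 0, p 1, ..., p n` (in word order). -/
noncomputable def compSeq (p : ℕ → PathIn V) : ℕ → PathIn V
  | 0 => p 0
  | (n + 1) => (compSeq p n).comp (p (n + 1))

end PathIn

namespace PathIn

variable {V : Type u} [Quiver.{v + 1} V]

/-- The conditions (1) and (2) of Lemmas `partition_o`/`partition_qo` on an interleaved
sequence of paths `q 0 = v₀, q 1 = u₁, q 2 = v₁, ..., q (2n-1) = u_n, q (2n) = v_n`. -/
def FactorConds (S : Set (PathIn V)) (n : ℕ) (q : ℕ → PathIn V) : Prop :=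
  -- consecutive pieces are composable
  (∀ i < 2 * n, (q i).tgt = (q (i + 1)).src) ∧
  -- `v_n` is a vertex
  (q (2 * n)).len = 0 ∧
  -- `v_1, ..., v_{n-1}` have positive length
  (∀ i, 1 ≤ i → i ≤ n - 1 → 0 < (q (2 * i)).len) ∧
  -- condition (1): `v_{i-1} u_i v_i ∈ S` for `1 ≤ i ≤ n`
  (∀ i, 1 ≤ i → i ≤ n →
    ((q (2 * i - 2)).comp ((q (2 * i - 1)).comp (q (2 * i)))) ∈ S) ∧
  -- condition (2): for `1 ≤ i ≤ n - 1`, there are no paths `uu, vv` of positive length with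
  -- `vv v_i uu ∈ S`, `uu` dividing `u_{i+1} v_{i+1}` on the left and `vv` dividing `u_i`
  -- on the right
  (∀ i, 1 ≤ i → i ≤ n - 1 → ¬ ∃ uu vv : PathIn V, 0 < uu.len ∧ 0 < vv.len ∧
      vv.tgt = (q (2 * i)).src ∧ (q (2 * i)).tgt = uu.src ∧
      (vv.comp ((q (2 * i)).comp uu)) ∈ S ∧
      PathIn.LDiv uu ((q (2 * i + 1)).comp (q (2 * i + 2))) ∧
      PathIn.RDiv vv (q (2 * i - 1)))

end PathIn

namespace QOP
open PathIn

variable {V : Type u} [Quiver.{v + 1} V]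

/-- Bundled arrows. -/
abbrev Arr (V : Type u) [Quiver.{v + 1} V] : Type (max u (v + 1)) := Σ a b : V, a ⟶ b

/-- The list of arrows of a path. -/
def pl : ∀ {a b : V}, Quiver.Path a b → List (Arr V)
  | _, _, Quiver.Path.nil => []
  | _, _, Quiver.Path.cons p e => pl p ++ [⟨_, _, e⟩]

theorem pl_length : ∀ {a b : V} (p : Quiver.Path a b), (pl p).length = p.length
  | _, _, Quiver.Path.nil => by simp [pl]
  | _, _, Quiver.Path.cons p _ => by
      simp [pl, pl_length p, Quiver.Path.length_cons]

theorem pl_comp {a b c : V} (p : Quiver.Path a b) (q : Quiver.Path b c) :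
    pl (p.comp q) = pl p ++ pl q := by
  induction q with
  | nil => simp [Quiver.Path.comp_nil, pl]
  | cons q e ih => simp [Quiver.Path.comp_cons, pl, ih]

theorem pl_cast {a a' b b' : V} (h1 : a = a') (h2 : b = b') (p : Quiver.Path a b) :
    pl (p.cast h1 h2) = pl p := by
  subst h1; subst h2; rw [Quiver.Path.cast_eq_cast]; rfl

theorem pl_inj : ∀ {a b c : V} (p : Quiver.Path a b) (q : Quiver.Path a c),
    pl p = pl q → b = c ∧ HEq p q := by
  intro a b c p
  induction p generalizing c with
  | nil =>
    intro q h
    cases q with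
    | nil => exact ⟨rfl, HEq.rfl⟩
    | cons q e => simp [pl] at h
  | cons p e ih =>
    intro q h
    cases q with
    | nil => simp [pl] at h
    | cons q f =>
      simp only [pl] at h
      obtain ⟨h1, h2⟩ := List.append_inj' h rfl
      have h3 : (⟨_, _, e⟩ : Arr V) = ⟨_, _, f⟩ := by simpa using h2
      obtain ⟨rfl, h4⟩ := Sigma.mk.inj_iff.mp h3
      obtain ⟨-, hq⟩ := ih q h1
      cases eq_of_heq hq
      obtain ⟨rfl, h5⟩ := Sigma.mk.inj_iff.mp (eq_of_heq h4)
      cases eq_of_heq h5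
      exact ⟨rfl, HEq.rfl⟩

/-- arrows of a bundled path -/
def pl' (p : PathIn V) : List (Arr V) := pl p.2.2

theorem ext' {p q : PathIn V} (h1 : p.src = q.src) (h2 : pl' p = pl' q) : p = q := by
  obtain ⟨a, b, P⟩ := p
  obtain ⟨a', b', Q⟩ := q
  cases h1
  obtain ⟨rfl, h⟩ := pl_inj P Q h2
  cases eq_of_heq h
  rfl

theorem len_eq (p : PathIn V) : p.len = (pl' p).length := (pl_length _).symm

theorem comp_def {p q : PathIn V} (h : p.tgt = q.src) :
    p.comp q = ⟨p.1, q.2.1, p.2.2.comp (q.2.2.cast h.symm rfl)⟩ := dif_pos h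

theorem src_comp {p q : PathIn V} (h : p.tgt = q.src) : (p.comp q).src = p.src := by
  rw [comp_def h]; rfl

theorem tgt_comp {p q : PathIn V} (h : p.tgt = q.src) : (p.comp q).tgt = q.tgt := by
  rw [comp_def h]; rfl

theorem pl'_comp {p q : PathIn V} (h : p.tgt = q.src) :
    pl' (p.comp q) = pl' p ++ pl' q := by
  rw [comp_def h]
  show pl (Quiver.Path.comp _ _) = _
  rw [pl_comp]
  exact congrArg (pl p.2.2 ++ ·) (pl_cast _ _ _)

theorem len_comp {p q : PathIn V} (h : p.tgt = q.src) :
    (p.comp q).len = p.len + q.len := by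
  rw [len_eq, pl'_comp h, List.length_append, ← len_eq, ← len_eq]

@[simp] theorem src_vert (a : V) : (vert a).src = a := rfl
@[simp] theorem tgt_vert (a : V) : (vert a).tgt = a := rfl
@[simp] theorem len_vert (a : V) : (vert a).len = 0 := rfl
@[simp] theorem pl'_vert (a : V) : pl' (vert a) = [] := by simp [pl', vert, pl]

theorem comp_vert (p : PathIn V) : p.comp (vert p.tgt) = p := by
  have h : p.tgt = (vert p.tgt).src := rfl
  exact ext' (src_comp h) (by rw [pl'_comp h]; simp)

theorem vert_comp (p : PathIn V) : (vert p.src).comp p = p := by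
  have h : (vert p.src).tgt = p.src := rfl
  exact ext' ((src_comp h).trans rfl) (by rw [pl'_comp h]; simp)

theorem comp_assoc {p q r : PathIn V} (h1 : p.tgt = q.src) (h2 : q.tgt = r.src) :
    (p.comp q).comp r = p.comp (q.comp r) := by
  have c1 : (p.comp q).tgt = r.src := by rw [tgt_comp h1]; exact h2
  have c2 : p.tgt = (q.comp r).src := by rw [src_comp h2]; exact h1
  refine ext' ?_ ?_
  · rw [src_comp c1, src_comp h1, src_comp c2]
  · rw [pl'_comp c1, pl'_comp h1, pl'_comp c2, pl'_comp h2, List.append_assoc]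

theorem comp_cancel_left {p q q' : PathIn V} (h : p.tgt = q.src) (h' : p.tgt = q'.src)
    (e : p.comp q = p.comp q') : q = q' := by
  refine ext' (h ▸ h'.symm ▸ rfl) ?_
  have := congrArg pl' e
  rw [pl'_comp h, pl'_comp h'] at this
  exact List.append_cancel_left this

theorem len_zero_eq_vert {p : PathIn V} (h : p.len = 0) : p = vert p.src := by
  refine ext' rfl ?_
  have : pl' p = [] := List.length_eq_zero_iff.mp (by rw [← len_eq]; exact h)
  simp [this]

end QOP
namespace QOP
open PathIn

variable {V : Type u} [Quiver.{v + 1} V]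

/-- bundle a raw path -/
def pIn {a b : V} (p : Quiver.Path a b) : PathIn V := ⟨a, b, p⟩

@[simp] theorem src_pIn {a b : V} (p : Quiver.Path a b) : (pIn p).src = a := rfl
@[simp] theorem tgt_pIn {a b : V} (p : Quiver.Path a b) : (pIn p).tgt = b := rfl
@[simp] theorem pl'_pIn {a b : V} (p : Quiver.Path a b) : pl' (pIn p) = pl p := rfl

/-- single-arrow path -/
def edge {c b : V} (e : c ⟶ b) : PathIn V := pIn (Quiver.Path.nil.cons e)

@[simp] theorem src_edge {c b : V} (e : c ⟶ b) : (edge e).src = c := rfl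
@[simp] theorem tgt_edge {c b : V} (e : c ⟶ b) : (edge e).tgt = b := rfl
@[simp] theorem pl'_edge {c b : V} (e : c ⟶ b) : pl' (edge e) = [⟨c, b, e⟩] := by
  simp [edge, pl', pIn, pl]

theorem comp_edge {a c b : V} (p : Quiver.Path a c) (e : c ⟶ b) :
    (pIn p).comp (edge e) = pIn (p.cons e) := by
  have h : (pIn p).tgt = (edge e).src := rfl
  refine ext' (src_comp h) ?_
  rw [pl'_comp h]
  simp [pl]

/-- prefix of length `m` (all of `p` if `m ≥ length`). -/
def prefP : ∀ {a b : V}, Quiver.Path a b → ℕ → PathIn V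
  | a, _, Quiver.Path.nil, _ => vert a
  | _, _, Quiver.Path.cons p e, m =>
      if (Quiver.Path.cons p e).length ≤ m then pIn (Quiver.Path.cons p e) else prefP p m

/-- suffix consisting of the last `m` arrows. -/
noncomputable def suffP : ∀ {a b : V}, Quiver.Path a b → ℕ → PathIn V
  | a, _, Quiver.Path.nil, _ => vert a
  | _, b, Quiver.Path.cons p e, m =>
      if m = 0 then vert b
      else (suffP p (m - 1)).comp (edge e)

/-- prefix of a bundled path -/
def pre (p : PathIn V) (m : ℕ) : PathIn V := prefP p.2.2 m

/-- suffix of a bundled path -/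
noncomputable def suf (p : PathIn V) (m : ℕ) : PathIn V := suffP p.2.2 m

theorem src_prefP : ∀ {a b : V} (P : Quiver.Path a b) (m : ℕ), (prefP P m).src = a
  | _, _, Quiver.Path.nil, _ => by simp [prefP]
  | _, _, Quiver.Path.cons p e, m => by
      rw [prefP]
      split
      · rfl
      · exact src_prefP p m

theorem src_pre (p : PathIn V) (m : ℕ) : (pre p m).src = p.src := src_prefP _ _

theorem pl_prefP : ∀ {a b : V} (P : Quiver.Path a b) (m : ℕ),
    pl' (prefP P m) = (pl P).take m
  | _, _, Quiver.Path.nil, m => by simp [prefP, pl]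
  | _, _, Quiver.Path.cons p e, m => by
      rw [prefP]
      split
      · next h =>
        have hl : (pl (p.cons e)).length ≤ m := by rwa [pl_length]
        show pl (p.cons e) = _
        rw [List.take_of_length_le hl]
      · next h =>
        rw [Quiver.Path.length_cons] at h
        have hm : m ≤ (pl p).length := by rw [pl_length]; omega
        rw [pl_prefP p m]
        have hc : pl (p.cons e) = pl p ++ [(⟨_, _, e⟩ : Arr V)] := by simp [pl]
        rw [hc, List.take_append_of_le_length hm]

theorem pl_pre (p : PathIn V) (m : ℕ) : pl' (pre p m) = (pl' p).take m := pl_prefP _ _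

theorem len_pre (p : PathIn V) (m : ℕ) : (pre p m).len = min m p.len := by
  rw [len_eq, pl_pre, List.length_take, ← len_eq]

theorem suffP_spec : ∀ {a b : V} (P : Quiver.Path a b) (m : ℕ), m ≤ P.length →
    (suffP P m).tgt = b ∧ (suffP P m).len = m ∧ pl' (suffP P m) = (pl P).drop (P.length - m)
  | _, _, Quiver.Path.nil, m, hm => by
      have : m = 0 := by simpa using hm
      subst this
      refine ⟨?_, ?_, ?_⟩ <;> simp [suffP, pl]
  | _, b, Quiver.Path.cons p e, m, hm => by
      rw [Quiver.Path.length_cons] at hm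
      rw [suffP]
      split
      · next h =>
        subst h
        refine ⟨rfl, rfl, ?_⟩
        rw [pl'_vert, eq_comm]
        apply List.drop_eq_nil_of_le
        rw [pl_length]; omega
      · next h =>
        have hm1 : m - 1 ≤ p.length := by omega
        obtain ⟨ht, hl, hp⟩ := suffP_spec p (m - 1) hm1
        have hc : (suffP p (m - 1)).tgt = (edge e).src := by rw [ht]; rfl
        refine ⟨tgt_comp hc, ?_, ?_⟩
        · rw [len_comp hc, hl]
          show m - 1 + (Quiver.Path.nil.cons e).length = m
          simp [Quiver.Path.length_cons, Quiver.Path.length_nil]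
          omega
        · rw [pl'_comp hc, hp, pl'_edge]
          have hlen : (p.cons e).length - m ≤ (pl p).length := by
            rw [pl_length, Quiver.Path.length_cons]; omega
          have hc2 : pl (p.cons e) = pl p ++ [(⟨_, _, e⟩ : Arr V)] := by simp [pl]
          show _ = (pl (p.cons e)).drop ((p.cons e).length - m)
          rw [hc2, List.drop_append_of_le_length hlen]
          congr 2
          rw [Quiver.Path.length_cons]
          omega

theorem tgt_suf (p : PathIn V) {m : ℕ} (hm : m ≤ p.len) : (suf p m).tgt = p.tgt :=
  (suffP_spec _ m hm).1

theorem len_suf (p : PathIn V) {m : ℕ} (hm : m ≤ p.len) : (suf p m).len = m :=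
  (suffP_spec _ m hm).2.1

theorem pl_suf (p : PathIn V) {m : ℕ} (hm : m ≤ p.len) :
    pl' (suf p m) = (pl' p).drop (p.len - m) :=
  (suffP_spec _ m hm).2.2

/-- decomposition of a path as prefix ∘ suffix -/
theorem pre_comp_suf : ∀ {a b : V} (P : Quiver.Path a b) (m : ℕ), m ≤ P.length →
    (prefP P m).tgt = (suffP P (P.length - m)).src ∧
      pIn P = (prefP P m).comp (suffP P (P.length - m))
  | a, _, Quiver.Path.nil, m, hm => by
      have : m = 0 := by simpa using hm
      subst this
      refine ⟨?_, ?_⟩ <;> simp only [prefP, suffP]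
      · rfl
      · exact (vert_comp (vert a)).symm
  | a, b, Quiver.Path.cons (b := c) p e, m, hm => by
      rcases Nat.lt_or_ge m (p.cons e).length with hlt | hge
      · rw [Quiver.Path.length_cons] at hlt
        have hpre : prefP (p.cons e) m = prefP p m := by
          rw [prefP, if_neg (by rw [Quiver.Path.length_cons]; omega)]
        have hm' : m ≤ p.length := by omega
        have hsuf : suffP (p.cons e) ((p.cons e).length - m)
            = (suffP p (p.length - m)).comp (edge e) := by
          rw [Quiver.Path.length_cons]
          have h1 : p.length + 1 - m = (p.length - m) + 1 := by omega
          rw [h1, suffP, if_neg (Nat.succ_ne_zero _)]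
          congr 1
        obtain ⟨iht, ihe⟩ := pre_comp_suf p m hm'
        have hts : (suffP p (p.length - m)).tgt = (edge e).src := by
          rw [(suffP_spec p _ (by omega)).1]; rfl
        rw [hpre, hsuf]
        constructor
        · rw [src_comp hts]; exact iht
        · rw [← comp_assoc iht hts, ← ihe, comp_edge]
      · have hpre : prefP (p.cons e) m = pIn (p.cons e) := by
          rw [prefP, if_pos hge]
        have hz : (p.cons e).length - m = 0 := by omega
        have hsuf : suffP (p.cons e) ((p.cons e).length - m) = vert b := by
          rw [hz, suffP, if_pos rfl]
        rw [hpre, hsuf]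
        exact ⟨rfl, (comp_vert _).symm⟩

theorem decomp (p : PathIn V) {m : ℕ} (hm : m ≤ p.len) :
    (pre p m).tgt = (suf p (p.len - m)).src ∧ p = (pre p m).comp (suf p (p.len - m)) :=
  pre_comp_suf p.2.2 m hm

end QOP
namespace QOP
open PathIn

variable {V : Type u} [Quiver.{v + 1} V]

/-- the segment `[x, y)` of a path -/
noncomputable def seg (W : PathIn V) (x y : ℕ) : PathIn V := suf (pre W y) (y - x)

/-- the vertex at position `x` along a path -/
def pt (W : PathIn V) (x : ℕ) : V := (pre W x).tgt

theorem len_pre' {W : PathIn V} {x : ℕ} (h : x ≤ W.len) : (pre W x).len = x := by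
  rw [len_pre]; omega

theorem pre_all (W : PathIn V) : pre W W.len = W := by
  refine ext' (src_pre _ _) ?_
  rw [pl_pre, len_eq, List.take_length]

theorem eq_pre {W X Y : PathIn V} (h : X.tgt = Y.src) (e : W = X.comp Y) :
    X = pre W X.len ∧ Y = suf W Y.len ∧ X.len + Y.len = W.len := by
  have hlen : W.len = X.len + Y.len := by rw [e, len_comp h]
  have hpl : pl' W = pl' X ++ pl' Y := by rw [e, pl'_comp h]
  have hXlen : X.len ≤ W.len := by omega
  have hX : X = pre W X.len := by
    refine ext' ?_ ?_
    · rw [src_pre, e, src_comp h]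
    · rw [pl_pre, hpl, len_eq, List.take_left]
  have hY : Y = suf W Y.len := by
    have hYlen : Y.len ≤ W.len := by omega
    refine ext' ?_ ?_
    · have hd := (decomp W hXlen).1
      have harith : W.len - X.len = Y.len := by omega
      rw [harith] at hd
      rw [← h, hX, hd]
    · rw [pl_suf W hYlen, hpl, len_eq]
      rw [← len_eq, hlen]
      have : X.len + Y.len - Y.len = X.len := by omega
      rw [this, len_eq, List.drop_left]
  exact ⟨hX, hY, hlen.symm⟩

theorem pre_pre {W : PathIn V} {x y : ℕ} (hxy : x ≤ y) : pre (pre W y) x = pre W x := by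
  refine ext' (by rw [src_pre, src_pre, src_pre]) ?_
  rw [pl_pre, pl_pre, pl_pre, List.take_take, min_eq_left hxy]

theorem seg_decomp {W : PathIn V} {x y : ℕ} (hxy : x ≤ y) (hyW : y ≤ W.len) :
    (pre W x).tgt = (seg W x y).src ∧ pre W y = (pre W x).comp (seg W x y) := by
  have hy' : x ≤ (pre W y).len := by rw [len_pre' hyW]; exact hxy
  obtain ⟨h1, h2⟩ := decomp (pre W y) hy'
  rw [len_pre' hyW] at h1 h2
  rw [pre_pre hxy] at h1 h2
  exact ⟨h1, h2⟩

theorem src_seg {W : PathIn V} {x y : ℕ} (hxy : x ≤ y) (hyW : y ≤ W.len) :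
    (seg W x y).src = pt W x := ((seg_decomp hxy hyW).1).symm

theorem tgt_seg {W : PathIn V} {x y : ℕ} (hxy : x ≤ y) (hyW : y ≤ W.len) :
    (seg W x y).tgt = pt W y := by
  have : y - x ≤ (pre W y).len := by rw [len_pre' hyW]; omega
  rw [seg, tgt_suf _ this]; rfl

theorem len_seg {W : PathIn V} {x y : ℕ} (hxy : x ≤ y) (hyW : y ≤ W.len) :
    (seg W x y).len = y - x := by
  have : y - x ≤ (pre W y).len := by rw [len_pre' hyW]; omega
  rw [seg, len_suf _ this]

theorem pl_seg {W : PathIn V} {x y : ℕ} (hxy : x ≤ y) (hyW : y ≤ W.len) :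
    pl' (seg W x y) = ((pl' W).take y).drop x := by
  have h1 : y - x ≤ (pre W y).len := by rw [len_pre' hyW]; omega
  rw [seg, pl_suf _ h1, pl_pre, len_pre' hyW]
  congr 1
  omega

theorem suf_all (W : PathIn V) : suf W W.len = W := by
  obtain ⟨h1, h2⟩ := decomp W (Nat.zero_le W.len)
  rw [Nat.sub_zero] at h1 h2
  have hv : pre W 0 = vert W.src := by
    refine ext' (src_pre _ _) ?_
    rw [pl_pre, List.take_zero, pl'_vert]
  rw [hv] at h1
  refine ext' ?_ ?_
  · rw [← h1]; rfl
  · rw [pl_suf W le_rfl, Nat.sub_self, List.drop_zero]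

theorem seg_all (W : PathIn V) : seg W 0 W.len = W := by
  rw [seg, Nat.sub_zero, pre_all, suf_all]

theorem pre_eq_seg {W : PathIn V} {x : ℕ} (h : x ≤ W.len) : pre W x = seg W 0 x := by
  have : seg W 0 x = suf (pre W x) (x - 0) := rfl
  rw [this, Nat.sub_zero]
  conv_lhs => rw [← suf_all (pre W x)]
  rw [len_pre' h]

theorem comp_seg {W : PathIn V} {x y z : ℕ} (hxy : x ≤ y) (hyz : y ≤ z) (hzW : z ≤ W.len) :
    (seg W x y).comp (seg W y z) = seg W x z := by
  have hyW : y ≤ W.len := le_trans hyz hzW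
  have h : (seg W x y).tgt = (seg W y z).src := by
    rw [tgt_seg hxy hyW, src_seg hyz hzW]
  refine ext' ?_ ?_
  · rw [src_comp h, src_seg hxy hyW, src_seg (le_trans hxy hyz) hzW]
  · rw [pl'_comp h, pl_seg hxy hyW, pl_seg hyz hzW, pl_seg (le_trans hxy hyz) hzW]
    have hylen : y ≤ (pl' W).length := by rw [← len_eq]; exact hyW
    have h1 : ((pl' W).take z).take y = (pl' W).take y := by
      rw [List.take_take, min_eq_left hyz]
    have h2 : (pl' W).take z = (pl' W).take y ++ ((pl' W).take z).drop y := by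
      conv_lhs => rw [← List.take_append_drop y ((pl' W).take z)]
      rw [h1]
    conv_rhs => rw [h2]
    rw [List.drop_append_of_le_length]
    rw [List.length_take]
    omega

theorem suf_eq_seg {W : PathIn V} {x : ℕ} (h : x ≤ W.len) :
    suf W (W.len - x) = seg W x W.len := by
  obtain ⟨h1, h2⟩ := decomp W h
  refine ext' ?_ ?_
  · rw [← h1, src_seg h le_rfl]; rfl
  · rw [pl_suf W (by omega), pl_seg h le_rfl, len_eq, List.take_length, ← len_eq]
    congr 1
    omega

theorem W_decomp {W : PathIn V} {x : ℕ} (h : x ≤ W.len) :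
    (seg W 0 x).tgt = (seg W x W.len).src ∧ W = (seg W 0 x).comp (seg W x W.len) := by
  obtain ⟨h1, h2⟩ := decomp W h
  rw [pre_eq_seg h, suf_eq_seg h] at h1 h2
  exact ⟨h1, h2⟩

end QOP
namespace QOP
open PathIn

variable {V : Type u} [Quiver.{v + 1} V]

theorem list_dt {α : Type*} (l : List α) (m n : ℕ) :
    (l.take n).drop m = (l.drop m).take (n - m) := List.drop_take

theorem mid_eq {W A B C : PathIn V} (hAB : A.tgt = B.src) (hBC : B.tgt = C.src)
    (e : W = A.comp (B.comp C)) :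
    B = seg W A.len (A.len + B.len) ∧ A.len + B.len ≤ W.len ∧ A = pre W A.len := by
  have hA : A.tgt = (B.comp C).src := by rw [src_comp hBC]; exact hAB
  obtain ⟨hApre, -, hlen⟩ := eq_pre hA e
  have hBC' : (B.comp C).len = B.len + C.len := len_comp hBC
  have hWlen : W.len = A.len + B.len + C.len := by omega
  have hbound : A.len + B.len ≤ W.len := by omega
  refine ⟨?_, hbound, hApre⟩
  refine ext' ?_ ?_
  · rw [src_seg (by omega) hbound, ← hAB]
    show A.tgt = (pre W A.len).tgt
    conv_lhs => rw [hApre]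
  · have hpl : pl' W = pl' A ++ (pl' B ++ pl' C) := by rw [e, pl'_comp hA, pl'_comp hBC]
    rw [pl_seg (by omega) hbound, hpl]
    rw [List.take_append]
    have hla : (pl' A).length = A.len := by rw [← len_eq]
    have hlb : (pl' B).length = B.len := by rw [← len_eq]
    rw [List.take_of_length_le (by omega), List.drop_append_of_le_length (by omega)]
    have h1 : A.len + B.len - (pl' A).length = B.len := by omega
    rw [h1, List.drop_eq_nil_of_le (by omega), List.take_append_of_le_length (by omega),
      List.take_of_length_le (by omega)]
    simp

theorem pre_seg {W : PathIn V} {c d k : ℕ} (hc : c ≤ d) (hd : d ≤ W.len) (hk : k ≤ d - c) :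
    pre (seg W c d) k = seg W c (c + k) := by
  have hck : c + k ≤ d := by omega
  refine ext' ?_ ?_
  · rw [src_pre, src_seg hc hd, src_seg (by omega) (by omega)]
  · rw [pl_pre, pl_seg hc hd, pl_seg (by omega) (le_trans hck hd)]
    rw [list_dt, list_dt, List.take_take]
    congr 1
    omega

theorem seg_seg {W : PathIn V} {c d x y : ℕ} (hc : c ≤ d) (hd : d ≤ W.len)
    (hx : x ≤ y) (hy : y ≤ d - c) :
    seg (seg W c d) x y = seg W (c + x) (c + y) := by
  have hcy : c + y ≤ d := by omega
  refine ext' ?_ ?_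
  · rw [src_seg hx (by rw [len_seg hc hd]; omega), src_seg (by omega) (by omega)]
    show (pre (seg W c d) x).tgt = pt W (c + x)
    rw [pre_seg hc hd (by omega), tgt_seg (by omega) (by omega)]
  · rw [pl_seg hx (by rw [len_seg hc hd]; omega), pl_seg hc hd,
      pl_seg (by omega) (le_trans hcy hd)]
    rw [list_dt, list_dt, list_dt, List.take_take, List.drop_drop]
    rw [list_dt]
    congr 1
    omega

theorem div_of_seg {W : PathIn V} {x y x' y' : ℕ} (h1 : x' ≤ x) (h2 : x ≤ y) (h3 : y ≤ y')
    (h4 : y' ≤ W.len) : Div (seg W x y) (seg W x' y') := by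
  refine ⟨seg W x' x, seg W y y', ?_, ?_, ?_⟩
  · rw [tgt_seg h1 (by omega), src_seg h2 (by omega)]
  · rw [tgt_seg h2 (by omega), src_seg h3 h4]
  · rw [comp_seg h1 h2 (by omega), comp_seg (le_trans h1 h2) h3 h4]

theorem div_seg_char {W : PathIn V} {c d : ℕ} (hc : c ≤ d) (hd : d ≤ W.len) (s : PathIn V) :
    Div s (seg W c d) ↔ ∃ x y, c ≤ x ∧ x ≤ y ∧ y ≤ d ∧ s = seg W x y := by
  constructor
  · rintro ⟨u, v, hu, hv, e⟩
    rw [comp_assoc hu hv] at e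
    obtain ⟨hBs, hbound, -⟩ := mid_eq hu hv e
    rw [len_seg hc hd] at hbound
    have := seg_seg hc hd (x := u.len) (y := u.len + s.len) (by omega) (by omega)
    rw [this] at hBs
    exact ⟨c + u.len, c + (u.len + s.len), by omega, by omega, by omega, hBs⟩
  · rintro ⟨x, y, hx, hxy, hy, rfl⟩
    exact div_of_seg hx hxy hy hd

theorem nested_red {S : Set (PathIn V)} (hred : Reduced S) {W : PathIn V} {x y x' y' : ℕ}
    (h1 : seg W x y ∈ S) (h2 : seg W x' y' ∈ S) (hx : x' ≤ x) (hxy : x ≤ y) (hy : y ≤ y')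
    (hW : y' ≤ W.len) (hne : x ≠ x' ∨ y ≠ y') : False := by
  by_cases heq : seg W x y = seg W x' y'
  · have l1 : (seg W x y).len = y - x := len_seg hxy (le_trans hy hW)
    have l2 : (seg W x' y').len = y' - x' := len_seg (by omega) hW
    rw [heq, l2] at l1
    rcases hne with h | h <;> omega
  · exact hred _ h2 _ h1 heq (div_of_seg hx hxy hy hW)

end QOP
namespace QOP
open PathIn

variable {V : Type u} [Quiver.{v + 1} V]

/-- no element of `S` occurs inside the window `[c, d]` of `W` -/
def NoElt (S : Set (PathIn V)) (W : PathIn V) (c d : ℕ) : Prop :=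
  ∀ x y, c ≤ x → x ≤ y → y ≤ d → seg W x y ∉ S

/-- A chain system of overlapping elements of `S` inside `W`:
`s i = seg W (α i) (β i)` for `1 ≤ i ≤ n`, ending at `E`. -/
structure Chain (S : Set (PathIn V)) (W : PathIn V) (l0 n : ℕ)
    (α β : ℕ → ℕ) (E : ℕ) : Prop where
  a1 : α 1 = 0
  b0 : β 0 = l0
  bn : β n = E
  hE : E ≤ W.len
  elt : ∀ i, 1 ≤ i → i ≤ n → α i ≤ β i ∧ β i ≤ E ∧ seg W (α i) (β i) ∈ S
  sep : ∀ i, 1 ≤ i → i ≤ n - 1 → β (i - 1) ≤ α (i + 1) ∧ α (i + 1) < β i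
  gap : ∀ i, 1 ≤ i → i ≤ n - 1 → ∀ x y, β (i - 1) ≤ x → x < α (i + 1) → β i < y →
      y ≤ β (i + 1) → seg W x y ∉ S
  one : n = 1 → l0 < E

section ChainFacts

variable {S : Set (PathIn V)} {W : PathIn V} {l0 n : ℕ} {α β : ℕ → ℕ} {E : ℕ}

theorem Chain.beta1 (h : Chain S W l0 n α β E) (hl0 : 0 < l0) (hn : 1 ≤ n) : l0 < β 1 := by
  rcases Nat.eq_or_lt_of_le hn with rfl | h2
  · have h3 := h.one rfl
    have h4 := h.bn
    omega
  · have h3 := (h.sep 1 le_rfl (by omega)).2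
    have h4 := (h.sep 1 le_rfl (by omega)).1
    simp only [Nat.sub_self] at h4
    have h5 := h.b0
    omega

theorem Chain.alpha_lt (h : Chain S W l0 n α β E) (hl0 : 0 < l0) :
    ∀ i, 1 ≤ i → i ≤ n - 1 → α i < α (i + 1) := by
  intro i h1 h2
  rcases Nat.eq_or_lt_of_le h1 with rfl | lt
  · have s1 := (h.sep 1 le_rfl (by omega)).1
    simp only [Nat.sub_self] at s1
    have s2 := h.a1
    have s3 := h.b0
    omega
  · have s1 := (h.sep (i - 1) (by omega) (by omega)).2
    have s2 := (h.sep i h1 h2).1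
    have e1 : i - 1 + 1 = i := by omega
    rw [e1] at s1
    omega

theorem Chain.beta_lt (hred : Reduced S) (h : Chain S W l0 n α β E) (hl0 : 0 < l0) :
    ∀ i, 1 ≤ i → i + 1 ≤ n → β i < β (i + 1) := by
  intro i h1 h2
  by_contra hc
  push_neg at hc
  have ha := h.alpha_lt hl0 i h1 (by omega)
  obtain ⟨e1, e2, e3⟩ := h.elt i h1 (by omega)
  obtain ⟨f1, f2, f3⟩ := h.elt (i + 1) (by omega) h2
  exact nested_red hred f3 e3 (le_of_lt ha) f1 hc (le_trans e2 h.hE) (Or.inl (by omega))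

theorem Chain.beta_mono (hred : Reduced S) (h : Chain S W l0 n α β E) (hl0 : 0 < l0) :
    ∀ i j, 1 ≤ i → i ≤ j → j ≤ n → β i ≤ β j := by
  intro i j h1
  induction j with
  | zero => intro h2 h3; omega
  | succ k ih =>
    intro h2 h3
    rcases Nat.lt_or_ge i (k + 1) with hlt | hge
    · have hik : β i ≤ β k := ih (by omega) (by omega)
      have hb : β k < β (k + 1) := h.beta_lt hred hl0 k (by omega) h3
      omega
    · have he : i = k + 1 := by omega
      rw [he]

theorem Chain.l0_le (hred : Reduced S) (h : Chain S W l0 n α β E) (hl0 : 0 < l0) :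
    ∀ i, i ≤ n → l0 ≤ β i := by
  intro i hi
  rcases Nat.eq_zero_or_pos i with rfl | hpos
  · rw [h.b0]
  · have h1 := h.beta1 hl0 (by omega)
    have := h.beta_mono hred hl0 1 i le_rfl hpos hi
    omega

/-- the key rigidity step -/
theorem rigid_aux {k k' : ℕ} {α' β' : ℕ → ℕ} {E' : ℕ}
    (hred : Reduced S) (hl0 : 0 < l0)
    (h : Chain S W l0 k α β E) (h' : Chain S W l0 k' α' β' E')
    (i : ℕ) (hi : 1 ≤ i) (hik : i + 1 ≤ k) (hik' : i + 1 ≤ k')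
    (hprev : β (i - 1) = β' (i - 1)) (hcur : β i = β' i)
    (hb : β (i + 1) ≤ β' (i + 1)) :
    α (i + 1) = α' (i + 1) ∧ β (i + 1) = β' (i + 1) := by
  obtain ⟨e1, e2, e3⟩ := h.elt (i + 1) (by omega) hik
  obtain ⟨f1, f2, f3⟩ := h'.elt (i + 1) (by omega) hik'
  have hsep := h.sep i hi (by omega)
  have hsep' := h'.sep i hi (by omega)
  have hblt : β i < β (i + 1) := h.beta_lt hred hl0 i hi hik
  rcases lt_trichotomy (α (i + 1)) (α' (i + 1)) with hlt | heq | hgt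
  · exfalso
    refine h'.gap i hi (by omega) (α (i + 1)) (β (i + 1)) ?_ hlt ?_ hb e3
    · rw [← hprev]; exact hsep.1
    · rw [← hcur]; exact hblt
  · refine ⟨heq, ?_⟩
    rcases Nat.eq_or_lt_of_le hb with e | lt
    · exact e
    · exfalso
      exact nested_red hred e3 f3 (le_of_eq heq.symm) e1 (le_of_lt lt)
        (le_trans f2 h'.hE) (Or.inr (by omega))
  · exfalso
    exact nested_red hred e3 f3 (le_of_lt hgt) e1 hb (le_trans f2 h'.hE)
      (Or.inl (by omega))

theorem rigid {k k' : ℕ} {α' β' : ℕ → ℕ} {E' : ℕ}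
    (hred : Reduced S) (hl0 : 0 < l0)
    (h : Chain S W l0 k α β E) (h' : Chain S W l0 k' α' β' E') :
    ∀ i, 1 ≤ i → i ≤ k → i ≤ k' → α i = α' i ∧ β i = β' i := by
  intro i
  induction i using Nat.strong_induction_on with
  | _ i ih =>
    intro h1 h2 h3
    rcases Nat.eq_or_lt_of_le h1 with rfl | hgt
    · -- base case i = 1
      have he := (h.elt 1 le_rfl h2).2.2
      have he' := (h'.elt 1 le_rfl h3).2.2
      have hb := (h.elt 1 le_rfl h2).1
      have hb' := (h'.elt 1 le_rfl h3).1
      rw [h.a1] at he hb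
      rw [h'.a1] at he' hb'
      refine ⟨by rw [h.a1, h'.a1], ?_⟩
      rcases le_total (β 1) (β' 1) with hle | hle
      · by_contra hne
        exact nested_red hred he he' (le_refl 0) (by omega) hle
          (le_trans (h'.elt 1 le_rfl h3).2.1 h'.hE) (Or.inr hne)
      · by_contra hne
        exact nested_red hred he' he (le_refl 0) (by omega) hle
          (le_trans (h.elt 1 le_rfl h2).2.1 h.hE) (Or.inr (fun e => hne e.symm))
    · -- step case
      obtain ⟨j, rfl⟩ : ∃ j, i = j + 1 := ⟨i - 1, by omega⟩
      have hj : 1 ≤ j := by omega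
      have hbeq := (ih j (by omega) hj (by omega) (by omega)).2
      have hprev : β (j - 1) = β' (j - 1) := by
        rcases Nat.eq_or_lt_of_le hj with e2 | lt2
        · rw [← e2]
          simp only [Nat.sub_self]
          rw [h.b0, h'.b0]
        · exact (ih (j - 1) (by omega) (by omega) (by omega) (by omega)).2
      rcases le_total (β (j + 1)) (β' (j + 1)) with hle | hle
      · exact rigid_aux hred hl0 h h' j hj h2 h3 hprev hbeq hle
      · obtain ⟨x, y⟩ := rigid_aux hred hl0 h' h j hj h3 h2 hprev.symm hbeq.symm hle
        exact ⟨x.symm, y.symm⟩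

end ChainFacts

end QOP
namespace QOP
open PathIn

variable {V : Type u} [Quiver.{v + 1} V]
variable {S : Set (PathIn V)}

theorem seg_of_prefix {W P R : PathIn V} (hPR : P.tgt = R.src) (e : W = P.comp R)
    {x y : ℕ} (hxy : x ≤ y) (hy : y ≤ P.len) : seg P x y = seg W x y := by
  obtain ⟨hP, -, hlen⟩ := eq_pre hPR e
  have hPW : P.len ≤ W.len := by omega
  have hPs : P = seg W 0 P.len := hP.trans (pre_eq_seg hPW)
  have key : ∀ Q : PathIn V, Q = seg W 0 P.len → seg Q x y = seg W x y := by
    intro Q hQ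
    rw [hQ, seg_seg (Nat.zero_le _) hPW hxy (by omega)]
    simp
  exact key P hPs

theorem chain_transfer {W P R : PathIn V} (hPR : P.tgt = R.src) (e : W = P.comp R)
    {l0 n : ℕ} {α β : ℕ → ℕ} {E : ℕ} (hE : E ≤ P.len) :
    Chain S P l0 n α β E ↔ Chain S W l0 n α β E := by
  have hPW : P.len ≤ W.len := by
    have := len_comp hPR; rw [← e] at this; omega
  constructor
  · intro h
    refine ⟨h.a1, h.b0, h.bn, by omega, ?_, h.sep, ?_, h.one⟩
    · intro i h1 h2
      obtain ⟨e1, e2, e3⟩ := h.elt i h1 h2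
      rw [seg_of_prefix hPR e e1 (by omega)] at e3
      exact ⟨e1, e2, e3⟩
    · intro i h1 h2 x y f1 f2 f3 f4 hmem
      have hy : y ≤ E := le_trans f4 (h.elt (i + 1) (by omega) (by omega)).2.1
      have hxy : x ≤ y := by
        have := (h.sep i h1 h2).2
        omega
      rw [← seg_of_prefix hPR e hxy (by omega)] at hmem
      exact h.gap i h1 h2 x y f1 f2 f3 f4 hmem
  · intro h
    refine ⟨h.a1, h.b0, h.bn, hE, ?_, h.sep, ?_, h.one⟩
    · intro i h1 h2
      obtain ⟨e1, e2, e3⟩ := h.elt i h1 h2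
      rw [← seg_of_prefix hPR e e1 (by omega)] at e3
      exact ⟨e1, e2, e3⟩
    · intro i h1 h2 x y f1 f2 f3 f4 hmem
      have hy : y ≤ E := le_trans f4 (h.elt (i + 1) (by omega) (by omega)).2.1
      have hxy : x ≤ y := by
        have := (h.sep i h1 h2).2
        omega
      rw [seg_of_prefix hPR e hxy (by omega)] at hmem
      exact h.gap i h1 h2 x y f1 f2 f3 f4 hmem

/-- positioning of `v0` and `w` inside `W = v0.comp w`. -/
theorem w_seg {v0 w : PathIn V} (hvw : v0.tgt = w.src) :
    v0 = seg (v0.comp w) 0 v0.len ∧ w = seg (v0.comp w) v0.len (v0.comp w).len ∧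
      (v0.comp w).len = v0.len + w.len := by
  have hlen : (v0.comp w).len = v0.len + w.len := len_comp hvw
  obtain ⟨h1, h2, h3⟩ := eq_pre hvw rfl
  refine ⟨?_, ?_, hlen⟩
  · exact h1.trans (pre_eq_seg (by omega))
  · refine h2.trans ?_
    have hs := suf_eq_seg (W := v0.comp w) (x := v0.len) (by omega)
    rwa [show (v0.comp w).len - v0.len = w.len by omega] at hs

theorem svan_iff' {W : PathIn V} {l0 c d : ℕ} (h0 : l0 ≤ c) (hc : c ≤ d) (hd : d ≤ W.len) :
    SVan S (seg W l0 c) (seg W l0 d) ↔ NoElt S W c d := by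
  have hcomp : (seg W l0 c).tgt = (seg W c d).src := by
    rw [tgt_seg h0 (by omega), src_seg hc hd]
  have hdec : seg W l0 d = (seg W l0 c).comp (seg W c d) :=
    (comp_seg h0 hc hd).symm
  constructor
  · rintro ⟨u, hu, he, hcl⟩
    have : u = seg W c d := comp_cancel_left hu hcomp (he.symm.trans hdec)
    subst this
    intro x y f1 f2 f3 hmem
    exact hcl _ hmem ((div_seg_char hc hd _).mpr ⟨x, y, f1, f2, f3, rfl⟩)
  · intro hne
    refine ⟨seg W c d, hcomp, hdec, ?_⟩
    intro s hs hdiv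
    obtain ⟨x, y, f1, f2, f3, rfl⟩ := (div_seg_char hc hd _).mp hdiv
    exact hne x y f1 f2 f3 hs

/-- localizing a prefix inside a bigger word: if `w = p.comp u` and `W = v0.comp w`,
then `p = seg W l0 (l0 + p.len)`. -/
theorem prefix_loc {v0 w p u : PathIn V} (hvw : v0.tgt = w.src)
    (hpu : p.tgt = u.src) (he : w = p.comp u) (hvp : v0.tgt = p.src) :
    p = seg (v0.comp w) v0.len (v0.len + p.len) ∧
      v0.len + p.len + u.len = (v0.comp w).len := by
  have e2 : v0.comp w = v0.comp (p.comp u) := by rw [he]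
  obtain ⟨h1, h2, h3⟩ := mid_eq hvp hpu e2
  have hl : (v0.comp w).len = v0.len + p.len + u.len := by
    rw [len_comp hvw, he, len_comp hpu]
    omega
  exact ⟨h1, by omega⟩

theorem asvan_parts {v0 w p : PathIn V} (hvw : v0.tgt = w.src) {b : ℕ}
    (hb0 : v0.len ≤ b) (hbM : b ≤ (v0.comp w).len)
    (hp : p = seg (v0.comp w) v0.len b) :
    ASVan S p w ↔
      (¬ NoElt S (v0.comp w) b (v0.comp w).len) ∧
        (∀ e, b ≤ e → e < (v0.comp w).len → NoElt S (v0.comp w) b e) := by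
  set W := v0.comp w with hW
  set M := W.len with hM
  obtain ⟨hv0s, hws, hlen⟩ := w_seg hvw
  have hsv : ∀ c, b ≤ c → c ≤ M → (SVan S p (seg W v0.len c) ↔ NoElt S W b c) := by
    intro c f1 f2
    rw [hp]
    exact svan_iff' hb0 (by omega) f2
  have hcomp0 : p.tgt = (seg W b M).src := by
    rw [hp, tgt_seg hb0 (by omega), src_seg hbM le_rfl]
  have hdec : w = p.comp (seg W b M) := by
    conv_lhs => rw [hws]
    rw [hp, comp_seg hb0 hbM le_rfl]
  constructor
  · rintro ⟨t, ht, he, hns, hpre⟩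
    have hteq : t = seg W b M := comp_cancel_left ht hcomp0 (he.symm.trans hdec)
    subst hteq
    constructor
    · intro hne
      apply hns
      rw [hws]
      exact (hsv M hbM le_rfl).mpr hne
    · intro e f1 f2
      have hu1 : (seg W b e).tgt = (seg W e M).src := by
        rw [tgt_seg f1 (by omega), src_seg (by omega) le_rfl]
      have hdec2 : seg W b M = (seg W b e).comp (seg W e M) :=
        (comp_seg f1 (by omega) le_rfl).symm
      have hlen2 : 0 < (seg W e M).len := by
        rw [len_seg (by omega) le_rfl]
        omega
      have := hpre (seg W b e) (seg W e M) hu1 hdec2 hlen2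
      have hpe : p.comp (seg W b e) = seg W v0.len e := by
        rw [hp, comp_seg hb0 f1 (by omega)]
      rw [hpe] at this
      exact (hsv e f1 (by omega)).mp this
  · rintro ⟨hne, hpre⟩
    refine ⟨seg W b M, hcomp0, hdec, ?_, ?_⟩
    · intro hsvan
      rw [hws] at hsvan
      exact hne ((hsv M hbM le_rfl).mp hsvan)
    · intro u1 u2 h12 he2 hl2
      have hu1len : u1.len ≤ (seg W b M).len := by
        rw [he2, len_comp h12]
        omega
      have hseglen : (seg W b M).len = M - b := len_seg hbM le_rfl
      have hu1 : u1 = seg W b (b + u1.len) := by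
        obtain ⟨hq, -, -⟩ := eq_pre h12 he2
        exact hq.trans (pre_seg hbM le_rfl (by rwa [hseglen] at hu1len))
      have hlt : b + u1.len < M := by
        have hlc := len_comp h12
        rw [← he2, hseglen] at hlc
        omega
      have hpe : p.comp u1 = seg W v0.len (b + u1.len) := by
        conv_lhs => rw [hp, hu1]
        exact comp_seg hb0 (by omega) (by omega)
      rw [hpe]
      exact (hsv (b + u1.len) (by omega) (by omega)).mpr (hpre _ (by omega) hlt)

end QOP
namespace QOP
open PathIn

variable {V : Type u} [Quiver.{v + 1} V]
variable {S : Set (PathIn V)}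

theorem comp_seg_left {W v0 : PathIn V} (hv : v0 = seg W 0 v0.len) {c : ℕ}
    (h1 : v0.len ≤ c) (h2 : c ≤ W.len) :
    v0.comp (seg W v0.len c) = seg W 0 c ∧ v0.tgt = (seg W v0.len c).src := by
  constructor
  · have h := comp_seg (W := W) (Nat.zero_le v0.len) h1 h2
    rwa [← hv] at h
  · have h := tgt_seg (W := W) (Nat.zero_le v0.len) (le_trans h1 h2)
    rw [← hv] at h
    exact h.trans (src_seg h1 h2).symm

theorem qo_step_mpr {m : ℕ} {w v0 : PathIn V} (hred : Reduced S) (hv0 : 0 < v0.len)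
    (ih1 : ∀ w' : PathIn V, (v0.tgt = w'.src ∧ ∃ α β : ℕ → ℕ,
        Chain S (v0.comp w') v0.len (m + 1) α β (v0.comp w').len) →
        (w', v0) ∈ QOverlaps S (m + 1))
    (ih2 : ∀ w' : PathIn V, (v0.tgt = w'.src ∧ ∃ α β : ℕ → ℕ,
        Chain S (v0.comp w') v0.len m α β (v0.comp w').len) →
        (w', v0) ∈ QOverlaps S m)
    (hvw : v0.tgt = w.src) {α β : ℕ → ℕ}
    (ch : Chain S (v0.comp w) v0.len (m + 2) α β (v0.comp w).len) :
    (w, v0) ∈ QOverlaps S (m + 2) := by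
  obtain ⟨hv0seg, hwseg, hlenW⟩ := w_seg hvw
  -- key positions
  have hsep := ch.sep (m + 1) (by omega) (by omega)
  simp only [Nat.add_sub_cancel] at hsep
  have hBA : β m ≤ α (m + 2) := hsep.1
  have hAC : α (m + 2) < β (m + 1) := hsep.2
  have helt := ch.elt (m + 2) (by omega) le_rfl
  have hbn := ch.bn
  have hsmem : seg (v0.comp w) (α (m + 2)) (v0.comp w).len ∈ S := by
    rw [← hbn]; exact helt.2.2
  have hAM : α (m + 2) ≤ (v0.comp w).len := by rw [← hbn]; exact helt.1
  have hCM : β (m + 1) ≤ (v0.comp w).len :=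
    le_trans (ch.elt (m + 1) (by omega) (by omega)).2.1 ch.hE
  have hl0B : v0.len ≤ β m := ch.l0_le hred hv0 m (by omega)
  have hl0C : v0.len ≤ β (m + 1) := ch.l0_le hred hv0 (m + 1) (by omega)
  have hBC : β m ≤ β (m + 1) := by omega
  -- the two witnesses
  have hw1mem : (seg (v0.comp w) v0.len (β (m + 1)), v0) ∈ QOverlaps S (m + 1) := by
    apply ih1
    have hch1 : Chain S (v0.comp w) v0.len (m + 1) α β (β (m + 1)) := by
      refine ⟨ch.a1, ch.b0, rfl, hCM, ?_, ?_, ?_, ?_⟩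
      · intro i i1 i2
        obtain ⟨e1, e2, e3⟩ := ch.elt i i1 (by omega)
        exact ⟨e1, ch.beta_mono hred hv0 i (m + 1) i1 i2 (by omega), e3⟩
      · intro i i1 i2
        exact ch.sep i i1 (by omega)
      · intro i i1 i2
        exact ch.gap i i1 (by omega)
      · intro h
        have hm0 : m = 0 := by omega
        subst hm0
        have hb1 := ch.beta1 hv0 (by omega)
        simp only [Nat.zero_add]
        omega
    have hP := (comp_seg_left hv0seg hl0C hCM).1
    have hvw1 := (comp_seg_left hv0seg hl0C hCM).2
    have hPlen : (v0.comp (seg (v0.comp w) v0.len (β (m + 1)))).len = β (m + 1) := by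
      rw [hP, len_seg (Nat.zero_le _) hCM]
      omega
    have hcompW : (seg (v0.comp w) 0 (β (m + 1))).comp
        (seg (v0.comp w) (β (m + 1)) (v0.comp w).len) = v0.comp w := by
      rw [comp_seg (Nat.zero_le _) hCM le_rfl, seg_all]
    have htP : (v0.comp (seg (v0.comp w) v0.len (β (m + 1)))).tgt
        = (seg (v0.comp w) (β (m + 1)) (v0.comp w).len).src := by
      rw [hP, tgt_seg (Nat.zero_le _) hCM, src_seg hCM le_rfl]
    have heP : v0.comp w = (v0.comp (seg (v0.comp w) v0.len (β (m + 1)))).comp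
        (seg (v0.comp w) (β (m + 1)) (v0.comp w).len) := by
      rw [hP, hcompW]
    refine ⟨hvw1, α, β, ?_⟩
    rw [hPlen]
    exact (chain_transfer htP heP (by rw [hPlen])).mpr hch1
  have hw2mem : (seg (v0.comp w) v0.len (β m), v0) ∈ QOverlaps S m := by
    apply ih2
    have hBM : β m ≤ (v0.comp w).len := by omega
    have hch2 : Chain S (v0.comp w) v0.len m α β (β m) := by
      refine ⟨ch.a1, ch.b0, rfl, hBM, ?_, ?_, ?_, ?_⟩
      · intro i i1 i2
        obtain ⟨e1, e2, e3⟩ := ch.elt i i1 (by omega)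
        exact ⟨e1, ch.beta_mono hred hv0 i m i1 i2 (by omega), e3⟩
      · intro i i1 i2
        exact ch.sep i i1 (by omega)
      · intro i i1 i2
        exact ch.gap i i1 (by omega)
      · intro h
        have hm1 : m = 1 := by omega
        subst hm1
        have hb1 := ch.beta1 hv0 (by omega)
        omega
    have hP := (comp_seg_left hv0seg hl0B hBM).1
    have hvw2 := (comp_seg_left hv0seg hl0B hBM).2
    have hPlen : (v0.comp (seg (v0.comp w) v0.len (β m))).len = β m := by
      rw [hP, len_seg (Nat.zero_le _) hBM]
      omega
    have hcompW : (seg (v0.comp w) 0 (β m)).comp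
        (seg (v0.comp w) (β m) (v0.comp w).len) = v0.comp w := by
      rw [comp_seg (Nat.zero_le _) hBM le_rfl, seg_all]
    have htP : (v0.comp (seg (v0.comp w) v0.len (β m))).tgt
        = (seg (v0.comp w) (β m) (v0.comp w).len).src := by
      rw [hP, tgt_seg (Nat.zero_le _) hBM, src_seg hBM le_rfl]
    have heP : v0.comp w = (v0.comp (seg (v0.comp w) v0.len (β m))).comp
        (seg (v0.comp w) (β m) (v0.comp w).len) := by
      rw [hP, hcompW]
    refine ⟨hvw2, α, β, ?_⟩
    rw [hPlen]
    exact (chain_transfer htP heP (by rw [hPlen])).mpr hch2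
  -- SVan for w₁
  have hsvan : SVan S (seg (v0.comp w) v0.len (β (m + 1))) w := by
    have hns : NoElt S (v0.comp w) (β (m + 1)) (v0.comp w).len := by
      intro x y f1 f2 f3 hmem
      exact nested_red hred hmem hsmem (by omega) f2 f3 le_rfl (Or.inl (by omega))
    have := (svan_iff' hl0C hCM le_rfl).mpr hns
    rwa [← hwseg] at this
  -- ASVan for w₂
  have hasvan : ASVan S (seg (v0.comp w) v0.len (β m)) w := by
    refine (asvan_parts hvw hl0B (by omega) rfl).mpr ⟨?_, ?_⟩
    · intro hno
      exact hno (α (m + 2)) (v0.comp w).len hBA (by omega) le_rfl hsmem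
    · intro e f1 f2 x y g1 g2 g3 hmem
      rcases Nat.lt_or_ge (β (m + 1)) y with hyC | hyC
      · -- y > β (m+1)
        rcases Nat.lt_or_ge x (α (m + 2)) with hxA | hxA
        · -- straddling: contradicts gap at m+1
          have hg := ch.gap (m + 1) (by omega) (by omega) x y ?_ hxA hyC ?_
          · exact hg hmem
          · simpa only [Nat.add_sub_cancel] using g1
          · show y ≤ β (m + 2)
            rw [hbn]; omega
        · -- nested in the last element
          exact nested_red hred hmem hsmem hxA g2 (by omega) le_rfl (Or.inr (by omega))
      · -- y ≤ β (m+1) : nested in element m+1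
        have houter := (ch.elt (m + 1) (by omega) (by omega)).2.2
        have halt : α (m + 1) < x := by
          rcases Nat.eq_zero_or_pos m with rfl | hm
          · have ha1 := ch.a1
            have hb0 := ch.b0
            simp only [Nat.zero_add] at g1 ⊢
            omega
          · have hs2 := (ch.sep m (by omega) (by omega)).2
            omega
        exact nested_red hred hmem houter (by omega) g2 hyC
          (le_trans (ch.elt (m + 1) (by omega) (by omega)).2.1 ch.hE)
          (Or.inl (by omega))
  exact ⟨_, hw1mem, _, hw2mem, hsvan, hasvan⟩

end QOP
namespace QOP
open PathIn

variable {V : Type u} [Quiver.{v + 1} V]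
variable {S : Set (PathIn V)}

theorem qo_step_mp {m : ℕ} {w v0 : PathIn V} (hred : Reduced S) (hv0 : 0 < v0.len)
    (ih1 : ∀ w' : PathIn V, (w', v0) ∈ QOverlaps S (m + 1) →
        (v0.tgt = w'.src ∧ ∃ α β : ℕ → ℕ,
          Chain S (v0.comp w') v0.len (m + 1) α β (v0.comp w').len))
    (ih2 : ∀ w' : PathIn V, (w', v0) ∈ QOverlaps S m →
        (v0.tgt = w'.src ∧ ∃ α β : ℕ → ℕ,
          Chain S (v0.comp w') v0.len m α β (v0.comp w').len))
    (hmem : (w, v0) ∈ QOverlaps S (m + 2)) :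
    v0.tgt = w.src ∧ ∃ α β : ℕ → ℕ,
      Chain S (v0.comp w) v0.len (m + 2) α β (v0.comp w).len := by
  obtain ⟨w1, hw1, w2, hw2, hsv, hasv⟩ := hmem
  dsimp only at hw1 hw2 hsv hasv
  obtain ⟨hvw1, α', β', ch1⟩ := ih1 w1 hw1
  obtain ⟨hvw2, α'', β'', ch2⟩ := ih2 w2 hw2
  obtain ⟨u, hu, he, hcl⟩ := hsv
  have hvw : v0.tgt = w.src := by rw [he, src_comp hu]; exact hvw1
  obtain ⟨hw1seg, hlen1⟩ := prefix_loc hvw hu he hvw1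
  obtain ⟨t, ht, he2, hns, hpre⟩ := hasv
  obtain ⟨hw2seg, hlen2⟩ := prefix_loc hvw ht he2 hvw2
  have hC : v0.len + w1.len ≤ (v0.comp w).len := by omega
  have hB : v0.len + w2.len ≤ (v0.comp w).len := by omega
  -- transfer the two chains into `v0.comp w`
  have heW : v0.comp w = (v0.comp w1).comp u := by
    rw [he]; exact (comp_assoc hvw1 hu).symm
  have htW : (v0.comp w1).tgt = u.src := by rw [tgt_comp hvw1]; exact hu
  have hlenvw1 : (v0.comp w1).len = v0.len + w1.len := len_comp hvw1
  have ch1W : Chain S (v0.comp w) v0.len (m + 1) α' β' (v0.len + w1.len) := by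
    rw [hlenvw1] at ch1
    exact (chain_transfer htW heW (by rw [hlenvw1])).mp ch1
  have heW2 : v0.comp w = (v0.comp w2).comp t := by
    rw [he2]; exact (comp_assoc hvw2 ht).symm
  have htW2 : (v0.comp w2).tgt = t.src := by rw [tgt_comp hvw2]; exact ht
  have hlenvw2 : (v0.comp w2).len = v0.len + w2.len := len_comp hvw2
  have ch2W : Chain S (v0.comp w) v0.len m α'' β'' (v0.len + w2.len) := by
    rw [hlenvw2] at ch2
    exact (chain_transfer htW2 heW2 (by rw [hlenvw2])).mp ch2
  -- coordinates for the vanishing conditions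
  obtain ⟨hnoE, hpfx⟩ := (asvan_parts hvw (by omega) hB hw2seg).mp ⟨t, ht, he2, hns, hpre⟩
  have hwW := (w_seg hvw).2.1
  have hsvan' : SVan S (seg (v0.comp w) v0.len (v0.len + w1.len))
      (seg (v0.comp w) v0.len (v0.comp w).len) := by
    rw [← hw1seg, ← hwW]
    exact ⟨u, hu, he, hcl⟩
  have hclean : NoElt S (v0.comp w) (v0.len + w1.len) (v0.comp w).len :=
    (svan_iff' (show v0.len ≤ v0.len + w1.len by omega) hC le_rfl).mp hsvan'
  -- the final element of the new chain
  have hex : ∃ x y, v0.len + w2.len ≤ x ∧ x ≤ y ∧ y ≤ (v0.comp w).len ∧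
      seg (v0.comp w) x y ∈ S := by
    by_contra hcon
    push_neg at hcon
    exact hnoE (fun x y f1 f2 f3 hm' => hcon x y f1 f2 f3 hm')
  obtain ⟨A, y0, hA1, hA2, hA3, hsmem0⟩ := hex
  have hy0 : y0 = (v0.comp w).len := by
    by_contra hy
    exact hpfx y0 (by omega) (by omega) A y0 hA1 hA2 le_rfl hsmem0
  subst hy0
  have hAC : A < v0.len + w1.len := by
    by_contra hge
    push_neg at hge
    exact hclean A _ hge hA2 le_rfl hsmem0
  -- alignment via rigidity
  have halign : v0.len + w2.len = β' m := by
    rcases Nat.eq_zero_or_pos m with rfl | hm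
    · have hz : w2.len = 0 := hw2.1
      have hb0 := ch1W.b0
      omega
    · have hr := (rigid hred hv0 ch1W ch2W m hm (by omega) le_rfl).2
      have hbn2 := ch2W.bn
      omega
  have hbn1 := ch1W.bn
  refine ⟨hvw, (fun i => if i ≤ m + 1 then α' i else A),
    (fun i => if i ≤ m + 1 then β' i else (v0.comp w).len), ?_⟩
  refine ⟨?_, ?_, ?_, le_rfl, ?_, ?_, ?_, ?_⟩
  · rw [if_pos (show 1 ≤ m + 1 by omega)]; exact ch1W.a1
  · rw [if_pos (show 0 ≤ m + 1 by omega)]; exact ch1W.b0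
  · rw [if_neg (show ¬ (m + 2 ≤ m + 1) by omega)]
  · -- elt
    intro i i1 i2
    by_cases hi : i ≤ m + 1
    · simp only [if_pos hi]
      obtain ⟨e1, e2, e3⟩ := ch1W.elt i i1 hi
      exact ⟨e1, by omega, e3⟩
    · simp only [if_neg hi]
      exact ⟨by omega, le_rfl, hsmem0⟩
  · -- sep
    intro i i1 i2
    by_cases hi : i ≤ m
    · simp only [if_pos (show i - 1 ≤ m + 1 by omega), if_pos (show i + 1 ≤ m + 1 by omega),
        if_pos (show i ≤ m + 1 by omega)]
      exact ch1W.sep i i1 (by omega)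
    · have hieq : i = m + 1 := by omega
      subst hieq
      simp only [if_pos (show m + 1 - 1 ≤ m + 1 by omega),
        if_neg (show ¬ (m + 1 + 1 ≤ m + 1) by omega), if_pos (le_refl (m + 1))]
      constructor
      · have : m + 1 - 1 = m := by omega
        rw [this]
        omega
      · omega
  · -- gap
    intro i i1 i2 x y f1 f2 f3 f4
    by_cases hi : i ≤ m
    · simp only [if_pos (show i - 1 ≤ m + 1 by omega), if_pos (show i + 1 ≤ m + 1 by omega),
        if_pos (show i ≤ m + 1 by omega)] at f1 f2 f3 f4 ⊢
      exact ch1W.gap i i1 (by omega) x y f1 f2 f3 f4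
    · have hieq : i = m + 1 := by omega
      subst hieq
      simp only [if_pos (show m + 1 - 1 ≤ m + 1 by omega),
        if_neg (show ¬ (m + 1 + 1 ≤ m + 1) by omega), if_pos (le_refl (m + 1))] at f1 f2 f3 f4
      intro hmem'
      have hf1 : v0.len + w2.len ≤ x := by
        have : m + 1 - 1 = m := by omega
        rw [this] at f1
        omega
      rcases Nat.eq_or_lt_of_le f4 with rfl | hylt
      · exact nested_red hred hsmem0 hmem' (by omega) hA2 le_rfl le_rfl (Or.inl (by omega))
      · exact hpfx y (by omega) (by omega) x y hf1 (by omega) le_rfl hmem'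
  · intro habs
    exact absurd habs (by omega)

end QOP
namespace QOP
open PathIn

variable {V : Type u} [Quiver.{v + 1} V]
variable {S : Set (PathIn V)}

theorem qo_iff_chain (hred : Reduced S) (n : ℕ) :
    ∀ (w v0 : PathIn V), 0 < v0.len →
      ((w, v0) ∈ QOverlaps S n ↔
        (v0.tgt = w.src ∧ ∃ α β : ℕ → ℕ,
          Chain S (v0.comp w) v0.len n α β (v0.comp w).len)) := by
  induction n using Nat.strong_induction_on with
  | _ n ih =>
  obtain _ | _ | m := n
  · intro w v0 hv0
    constructor
    · rintro ⟨h1, h2, h3⟩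
      dsimp only at h1 h2 h3
      have hlen : (v0.comp w).len = v0.len := by rw [len_comp h3]; omega
      refine ⟨h3, fun _ => 0, fun _ => v0.len, ?_⟩
      refine ⟨rfl, rfl, hlen.symm, le_rfl, ?_, ?_, ?_, ?_⟩
      · intro i i1 i2; omega
      · intro i i1 i2; omega
      · intro i i1 i2; omega
      · intro h; exact absurd h (by omega)
    · rintro ⟨hvw, α, β, ch⟩
      have hb0 := ch.b0
      have hbn := ch.bn
      have hlen := len_comp hvw
      exact ⟨show w.len = 0 by omega, hv0, hvw⟩
  · intro w v0 hv0
    constructor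
    · rintro ⟨h1, h2, h3, h4⟩
      dsimp only at h1 h2 h3 h4
      have hlen := len_comp h3
      refine ⟨h3, fun _ => 0, fun i => if i = 0 then v0.len else (v0.comp w).len, ?_⟩
      refine ⟨rfl, by rw [if_pos rfl], by rw [if_neg (show ¬(0 + 1 = 0) by omega)], le_rfl, ?_, ?_, ?_, ?_⟩
      · intro i i1 i2
        have : i = 1 := by omega
        subst this
        rw [if_neg one_ne_zero]
        exact ⟨Nat.zero_le _, le_rfl, by rw [seg_all]; exact h4⟩
      · intro i i1 i2; omega
      · intro i i1 i2; omega
      · intro _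
        omega
    · rintro ⟨hvw, α, β, ch⟩
      have helt := (ch.elt 1 le_rfl le_rfl).2.2
      rw [ch.a1, ch.bn] at helt
      rw [seg_all] at helt
      have hone := ch.one rfl
      have hlen := len_comp hvw
      exact ⟨show 0 < w.len by omega, hv0, hvw, helt⟩
  · intro w v0 hv0
    constructor
    · intro hmem
      exact qo_step_mp hred hv0
        (fun w' h => (ih (m + 1) (by omega) w' v0 hv0).mp h)
        (fun w' h => (ih m (by omega) w' v0 hv0).mp h) hmem
    · rintro ⟨hvw, α, β, ch⟩
      exact qo_step_mpr hred hv0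
        (fun w' h => (ih (m + 1) (by omega) w' v0 hv0).mpr h)
        (fun w' h => (ih m (by omega) w' v0 hv0).mpr h) hvw ch

end QOP
namespace QOP
open PathIn

variable {V : Type u} [Quiver.{v + 1} V]
variable {S : Set (PathIn V)}

theorem suf_seg {W : PathIn V} {c d k : ℕ} (hc : c ≤ d) (hd : d ≤ W.len) (hk : k ≤ d - c) :
    suf (seg W c d) k = seg W (d - k) d := by
  have hlen : (seg W c d).len = d - c := len_seg hc hd
  have h1 := suf_eq_seg (W := seg W c d) (x := d - c - k) (by rw [hlen]; omega)
  rw [hlen] at h1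
  have e1 : d - c - (d - c - k) = k := by omega
  rw [e1] at h1
  rw [h1, seg_seg hc hd (by omega) (le_refl (d - c))]
  congr 1 <;> omega

/-- the boundary function of the factorization associated to a chain -/
def gfun (n : ℕ) (α β : ℕ → ℕ) : ℕ → ℕ := fun k =>
  if k = 0 then 0
  else if 2 * n ≤ k then β n
  else if k % 2 = 1 then β ((k - 1) / 2)
  else α (k / 2 + 1)

section G

variable {n : ℕ} {α β : ℕ → ℕ}

theorem gfun_zero : gfun n α β 0 = 0 := by simp [gfun]

theorem gfun_one (hn : 2 ≤ 2 * n) : gfun n α β 1 = β 0 := by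
  unfold gfun
  rw [if_neg (by omega), if_neg (by omega), if_pos (by omega)]

theorem gfun_odd {i : ℕ} (h : 2 * i + 1 < 2 * n) : gfun n α β (2 * i + 1) = β i := by
  unfold gfun
  rw [if_neg (by omega), if_neg (by omega), if_pos (by omega)]
  congr 1
  omega

theorem gfun_even {i : ℕ} (h1 : 1 ≤ i) (h2 : 2 * i < 2 * n) : gfun n α β (2 * i) = α (i + 1) := by
  unfold gfun
  rw [if_neg (by omega), if_neg (by omega), if_neg (by omega)]
  congr 1
  omega

theorem gfun_big {k : ℕ} (h : 2 * n ≤ k) (hn : 1 ≤ n) : gfun n α β k = β n := by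
  unfold gfun
  rw [if_neg (by omega), if_pos h]

end G

section C2F

variable {W : PathIn V} {l0 n : ℕ} {α β : ℕ → ℕ}

theorem g_facts (hred : Reduced S) (hl0 : 0 < l0) (hn : 1 ≤ n)
    (ch : Chain S W l0 n α β (β n)) :
    (∀ k, gfun n α β k ≤ gfun n α β (k + 1)) ∧ (∀ k, gfun n α β k ≤ β n) := by
  have hble : ∀ i, i ≤ n → β i ≤ β n := by
    intro i hi
    rcases Nat.eq_zero_or_pos i with rfl | hi1
    · rw [ch.b0]
      exact ch.l0_le hred hl0 n le_rfl
    · exact ch.beta_mono hred hl0 i n hi1 hi le_rfl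
  have hbound : ∀ k, gfun n α β k ≤ β n := by
    intro k
    rcases Nat.eq_zero_or_pos k with rfl | hk
    · rw [gfun_zero]; omega
    rcases Nat.lt_or_ge k (2 * n) with hk2 | hk2
    · rcases Nat.even_or_odd k with he | ho
      · obtain ⟨i, rfl⟩ : ∃ i, k = 2 * i := ⟨k / 2, by rcases he with ⟨j, hj⟩; omega⟩
        rw [gfun_even (by omega) hk2]
        have h1 := (ch.sep i (by omega) (by omega)).2
        have h2 := hble i (by omega)
        omega
      · obtain ⟨i, rfl⟩ : ∃ i, k = 2 * i + 1 := ⟨k / 2, by rcases ho with ⟨j, hj⟩; omega⟩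
        rw [gfun_odd hk2]
        exact hble i (by omega)
    · rw [gfun_big hk2 hn]
  refine ⟨?_, hbound⟩
  intro k
  rcases Nat.eq_zero_or_pos k with rfl | hk
  · rw [gfun_zero]; omega
  rcases Nat.lt_or_ge k (2 * n) with hk2 | hk2
  · rcases Nat.even_or_odd k with he | ho
    · obtain ⟨i, rfl⟩ : ∃ i, k = 2 * i := ⟨k / 2, by rcases he with ⟨j, hj⟩; omega⟩
      rw [gfun_even (by omega) hk2]
      have h1 := (ch.sep i (by omega) (by omega)).2
      have e : 2 * i + 1 = 2 * i + 1 := rfl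
      rw [show (2 * i + 1 : ℕ) = 2 * i + 1 from rfl, gfun_odd (by omega)]
      omega
    · obtain ⟨i, rfl⟩ : ∃ i, k = 2 * i + 1 := ⟨k / 2, by rcases ho with ⟨j, hj⟩; omega⟩
      rw [gfun_odd hk2]
      rcases Nat.lt_or_ge (2 * i + 1 + 1) (2 * n) with hlt | hge
      · have : 2 * i + 1 + 1 = 2 * (i + 1) := by omega
        rw [this, gfun_even (by omega) (by omega)]
        have := (ch.sep (i + 1) (by omega) (by omega)).1
        simpa only [Nat.add_sub_cancel] using this
      · rw [gfun_big (by omega) hn]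
        exact hble i (by omega)
  · rw [gfun_big hk2 hn, gfun_big (by omega) hn]

theorem g_mono_le (hred : Reduced S) (hl0 : 0 < l0) (hn : 1 ≤ n)
    (ch : Chain S W l0 n α β (β n)) :
    ∀ j k, j ≤ k → gfun n α β j ≤ gfun n α β k := by
  intro j k hjk
  induction k with
  | zero => have : j = 0 := by omega
            rw [this]
  | succ k2 ih =>
    rcases Nat.lt_or_ge j (k2 + 1) with hlt | hge
    · exact le_trans (ih (by omega)) ((g_facts hred hl0 hn ch).1 k2)
    · have : j = k2 + 1 := by omega
      rw [this]

end C2F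

end QOP
namespace QOP
open PathIn

variable {V : Type u} [Quiver.{v + 1} V]
variable {S : Set (PathIn V)}

theorem chain_to_fact {w v0 : PathIn V} {n : ℕ} {α β : ℕ → ℕ}
    (hred : Reduced S) (hv0 : 0 < v0.len) (hn : 1 ≤ n) (hvw : v0.tgt = w.src)
    (ch0 : Chain S (v0.comp w) v0.len n α β ((v0.comp w).len)) :
    ∃ q : ℕ → PathIn V, q 0 = v0 ∧
      w = PathIn.compSeq (fun m => q (m + 1)) (2 * n - 1) ∧
      PathIn.FactorConds S n q ∧ (n = 1 → 0 < (q 1).len) := by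
  have hbnM := ch0.bn
  have ch : Chain S (v0.comp w) v0.len n α β (β n) := by rw [hbnM]; exact ch0
  obtain ⟨hv0seg, hwseg, hlenW⟩ := w_seg hvw
  set W := v0.comp w with hWdef
  obtain ⟨hmono, hbound⟩ := g_facts hred hv0 hn ch
  have hmle := g_mono_le hred hv0 hn ch
  have hballM : ∀ k, gfun n α β k ≤ W.len := fun k => by
    have := hbound k; omega
  have hg0 : gfun n α β 0 = 0 := gfun_zero
  have hg1 : gfun n α β 1 = v0.len := by rw [gfun_one (by omega), ch.b0]
  have hgbig : ∀ k, 2 * n ≤ k → gfun n α β k = β n := fun k hk => gfun_big hk hn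
  refine ⟨fun k => seg W (gfun n α β k) (gfun n α β (k + 1)), ?_, ?_, ⟨?_, ?_, ?_, ?_, ?_⟩, ?_⟩
  · -- q 0 = v0
    show seg W (gfun n α β 0) (gfun n α β 1) = v0
    rw [hg0, hg1, ← hv0seg]
  · -- w = compSeq ...
    have hcs : ∀ k, PathIn.compSeq (fun m => seg W (gfun n α β (m + 1)) (gfun n α β (m + 1 + 1))) k
        = seg W (gfun n α β 1) (gfun n α β (k + 2)) := by
      intro k
      induction k with
      | zero => rfl
      | succ j ih =>
        show (PathIn.compSeq _ j).comp _ = _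
        rw [ih]
        exact comp_seg (hmle 1 (j + 2) (by omega)) (hmle (j + 2) (j + 3) (by omega))
          (hballM (j + 3))
    rw [hcs (2 * n - 1)]
    rw [show 2 * n - 1 + 2 = 2 * n + 1 by omega, hgbig (2 * n + 1) (by omega), hg1]
    rw [hbnM]
    exact hwseg
  · -- (a) composability
    intro i hi
    rw [tgt_seg (hmle i (i + 1) (by omega)) (hballM (i + 1)),
      src_seg (hmle (i + 1) (i + 2) (by omega)) (hballM (i + 2))]
  · -- (b) last piece trivial
    show (seg W (gfun n α β (2 * n)) (gfun n α β (2 * n + 1))).len = 0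
    rw [len_seg (hmle (2 * n) (2 * n + 1) (by omega)) (hballM (2 * n + 1)),
      hgbig (2 * n) le_rfl, hgbig (2 * n + 1) (by omega)]
    omega
  · -- (c) middle v's positive
    intro i i1 i2
    show 0 < (seg W (gfun n α β (2 * i)) (gfun n α β (2 * i + 1))).len
    rw [len_seg (hmle (2 * i) (2 * i + 1) (by omega)) (hballM (2 * i + 1)),
      gfun_even i1 (by omega), gfun_odd (by omega)]
    have := (ch.sep i i1 i2).2
    omega
  · -- (d) elements of S
    intro i i1 i2
    generalize ha : 2 * i - 2 = a
    rw [show 2 * i - 1 = a + 1 by omega, show 2 * i = a + 2 by omega]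
    show (seg W (gfun n α β a) (gfun n α β (a + 1))).comp
        ((seg W (gfun n α β (a + 1)) (gfun n α β (a + 2))).comp
          (seg W (gfun n α β (a + 2)) (gfun n α β (a + 3)))) ∈ S
    rw [comp_seg (hmle (a + 1) (a + 2) (by omega))
        (hmle (a + 2) (a + 3) (by omega)) (hballM _),
      comp_seg (hmle a (a + 1) (by omega))
        (hmle (a + 1) (a + 3) (by omega)) (hballM _)]
    have hright : gfun n α β (a + 3) = β i := by
      rw [show a + 3 = 2 * i + 1 by omega]
      rcases Nat.lt_or_ge (2 * i + 1) (2 * n) with hlt | hge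
      · exact gfun_odd hlt
      · rw [hgbig _ (by omega)]
        congr 1
        omega
    have hleft : gfun n α β a = α i := by
      rcases Nat.eq_or_lt_of_le i1 with rfl | hi2
      · rw [show a = 0 by omega, hg0]
        exact ch.a1.symm
      · rw [show a = 2 * (i - 1) by omega, gfun_even (by omega) (by omega)]
        congr 1
        omega
    rw [hright, hleft]
    exact (ch.elt i i1 i2).2.2
  · -- (e) no straddling elements
    intro i i1 i2
    rintro ⟨uu, vv, huu, hvv, hvt, hut, hmem, hld, hrd⟩
    simp only [] at hvt hut hmem hld hrd
    have hq2i : gfun n α β (2 * i) = α (i + 1) := gfun_even i1 (by omega)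
    have hq2i1 : gfun n α β (2 * i + 1) = β i := gfun_odd (by omega)
    have hg2i3 : gfun n α β (2 * i + 1 + 1 + 1) = β (i + 1) := by
      rw [show 2 * i + 1 + 1 + 1 = 2 * (i + 1) + 1 by omega]
      rcases Nat.lt_or_ge (2 * (i + 1) + 1) (2 * n) with hlt | hge
      · exact gfun_odd hlt
      · rw [hgbig _ (by omega)]
        congr 1
        omega
    have hg2i2 : gfun n α β (2 * i + 1 + 1) = gfun n α β (2 * i + 1 + 1) := rfl
    -- the path u_{i+1} v_{i+1}
    have hXeq : (seg W (gfun n α β (2 * i + 1)) (gfun n α β (2 * i + 1 + 1))).comp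
        (seg W (gfun n α β (2 * i + 2)) (gfun n α β (2 * i + 2 + 1)))
        = seg W (β i) (β (i + 1)) := by
      rw [show 2 * i + 2 = 2 * i + 1 + 1 from rfl]
      rw [comp_seg (hmle (2 * i + 1) (2 * i + 1 + 1) (by omega))
        (hmle (2 * i + 1 + 1) (2 * i + 1 + 1 + 1) (by omega)) (hballM _)]
      rw [hq2i1, hg2i3]
    rw [hXeq] at hld
    -- the path u_i
    have hg2im1 : gfun n α β (2 * i - 1) = β (i - 1) := by
      rw [show 2 * i - 1 = 2 * (i - 1) + 1 by omega, gfun_odd (by omega)]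
    have hYeq : seg W (gfun n α β (2 * i - 1)) (gfun n α β (2 * i - 1 + 1))
        = seg W (β (i - 1)) (α (i + 1)) := by
      rw [hg2im1, show 2 * i - 1 + 1 = 2 * i by omega, hq2i]
    rw [hYeq] at hrd
    -- bounds
    have hsep := ch.sep i i1 i2
    have hb1 : β (i - 1) ≤ α (i + 1) := hsep.1
    have hb2 : α (i + 1) < β i := hsep.2
    have hbi1 : β (i + 1) ≤ β n := by
      rcases Nat.eq_or_lt_of_le (show i + 1 ≤ n by omega) with rfl | hlt
      · exact le_rfl
      · exact ch.beta_mono hred hv0 (i + 1) n (by omega) (by omega) le_rfl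
    have hbn_le : β n ≤ W.len := by rw [← hbnM]
    have hbb : β i < β (i + 1) := ch.beta_lt hred hv0 i i1 (by omega)
    -- localize uu
    obtain ⟨v', hvt', he'⟩ := hld
    have huulen : uu.len ≤ β (i + 1) - β i := by
      have := len_comp hvt'
      rw [← he', len_seg (by omega) (by omega)] at this
      omega
    have huupos : 0 < uu.len := huu
    have huueq : uu = seg W (β i) (β i + uu.len) := by
      obtain ⟨hq', -, -⟩ := eq_pre hvt' he'
      exact hq'.trans (pre_seg (by omega) (by omega) huulen)
    -- localize vv
    obtain ⟨u', hu't, he''⟩ := hrd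
    have hvvlen : vv.len ≤ α (i + 1) - β (i - 1) := by
      have := len_comp hu't
      rw [← he'', len_seg hb1 (by omega)] at this
      omega
    have hvveq : vv = seg W (α (i + 1) - vv.len) (α (i + 1)) := by
      obtain ⟨-, hs', -⟩ := eq_pre hu't he''
      exact hs'.trans (suf_seg hb1 (by omega) hvvlen)
    -- assemble the element
    have hq2ieq : seg W (gfun n α β (2 * i)) (gfun n α β (2 * i + 1))
        = seg W (α (i + 1)) (β i) := by rw [hq2i, hq2i1]
    rw [hq2ieq, huueq, hvveq] at hmem
    rw [comp_seg (by omega) (by omega) (by omega),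
      comp_seg (show α (i + 1) - vv.len ≤ α (i + 1) by omega) (by omega) (by omega)] at hmem
    exact ch.gap i i1 i2 (α (i + 1) - vv.len) (β i + uu.len) (by omega) (by omega)
      (by omega) (by omega) hmem
  · -- condition (3)
    intro hn1
    subst hn1
    show 0 < (seg W (gfun 1 α β 1) (gfun 1 α β 2)).len
    rw [len_seg (hmle 1 2 (by omega)) (hballM 2), hg1, hgbig 2 le_rfl]
    have := ch.one rfl
    omega

end QOP
namespace QOP
open PathIn

variable {V : Type u} [Quiver.{v + 1} V]
variable {S : Set (PathIn V)}

theorem fact_to_chain {w v0 : PathIn V} {n : ℕ} (hv0 : 0 < v0.len) (hn : 1 ≤ n)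
    {q : ℕ → PathIn V} (hq0 : q 0 = v0)
    (hw : w = PathIn.compSeq (fun m => q (m + 1)) (2 * n - 1))
    (hfc : PathIn.FactorConds S n q) (h3 : n = 1 → 0 < (q 1).len) :
    v0.tgt = w.src ∧ ∃ α β : ℕ → ℕ,
      Chain S (v0.comp w) v0.len n α β (v0.comp w).len := by
  obtain ⟨ha, hb, hc, hd, he⟩ := hfc
  -- compSeq endpoint bookkeeping
  have htgt : ∀ k, k ≤ 2 * n → (PathIn.compSeq q k).tgt = (q k).tgt := by
    intro k
    induction k with
    | zero => intro _; rfl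
    | succ j ih =>
      intro hk
      show ((PathIn.compSeq q j).comp (q (j + 1))).tgt = _
      have hcp : (PathIn.compSeq q j).tgt = (q (j + 1)).src := by
        rw [ih (by omega)]; exact ha j (by omega)
      exact tgt_comp hcp
  have hcomp : ∀ k, k < 2 * n → (PathIn.compSeq q k).tgt = (q (k + 1)).src := by
    intro k hk
    rw [htgt k (by omega)]; exact ha k hk
  have hftgt : ∀ j, j + 1 ≤ 2 * n →
      (PathIn.compSeq (fun m => q (m + 1)) j).tgt = (q (j + 1)).tgt := by
    intro j
    induction j with
    | zero => intro _; rfl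
    | succ j ih =>
      intro hk
      show ((PathIn.compSeq (fun m => q (m + 1)) j).comp (q (j + 2))).tgt = _
      have hcp : (PathIn.compSeq (fun m => q (m + 1)) j).tgt = (q (j + 2)).src := by
        rw [ih (by omega)]; exact ha (j + 1) (by omega)
      exact tgt_comp hcp
  have hfsrc : ∀ j, j + 1 ≤ 2 * n →
      (PathIn.compSeq (fun m => q (m + 1)) j).src = (q 1).src := by
    intro j
    induction j with
    | zero => intro _; rfl
    | succ j ih =>
      intro hk
      show ((PathIn.compSeq (fun m => q (m + 1)) j).comp (q (j + 2))).src = _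
      have hcp : (PathIn.compSeq (fun m => q (m + 1)) j).tgt = (q (j + 2)).src := by
        rw [hftgt j (by omega)]; exact ha (j + 1) (by omega)
      rw [src_comp hcp]
      exact ih (by omega)
  have hvw : v0.tgt = w.src := by
    rw [hw, hfsrc (2 * n - 1) (by omega), ← hq0]
    exact ha 0 (by omega)
  have hshift : ∀ k, k + 1 ≤ 2 * n →
      PathIn.compSeq q (k + 1) = (q 0).comp (PathIn.compSeq (fun m => q (m + 1)) k) := by
    intro k
    induction k with
    | zero => intro _; rfl
    | succ j ih =>
      intro hk
      show (PathIn.compSeq q (j + 1)).comp (q (j + 2)) = _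
      rw [ih (by omega)]
      have h0f : (q 0).tgt = (PathIn.compSeq (fun m => q (m + 1)) j).src := by
        rw [hfsrc j (by omega)]; exact ha 0 (by omega)
      have hcpf : (PathIn.compSeq (fun m => q (m + 1)) j).tgt = (q (j + 2)).src := by
        rw [hftgt j (by omega)]; exact ha (j + 1) (by omega)
      exact comp_assoc h0f hcpf
  have hW : v0.comp w = PathIn.compSeq q (2 * n) := by
    have hs := hshift (2 * n - 1) (by omega)
    rw [show 2 * n - 1 + 1 = 2 * n by omega] at hs
    rw [hq0] at hs
    rw [hw, hs]
  have hresid : ∀ j k, k + j = 2 * n → ∃ R, (PathIn.compSeq q k).tgt = R.src ∧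
      v0.comp w = (PathIn.compSeq q k).comp R := by
    intro j
    induction j with
    | zero =>
      intro k hk
      have hk' : k = 2 * n := by omega
      subst hk'
      exact ⟨vert (PathIn.compSeq q (2 * n)).tgt, rfl, by rw [hW]; exact (comp_vert _).symm⟩
    | succ j ih =>
      intro k hk
      obtain ⟨R, hR1, hR2⟩ := ih (k + 1) (by omega)
      rw [htgt (k + 1) (by omega)] at hR1
      have hcp := hcomp k (by omega)
      refine ⟨(q (k + 1)).comp R, ?_, ?_⟩
      · rw [src_comp hR1]; exact hcp
      · rw [hR2]; exact comp_assoc hcp hR1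
  -- position function
  have hc0 : (PathIn.compSeq q 0).len = v0.len := by
    show (q 0).len = _; rw [hq0]
  have hcsucc : ∀ k, k < 2 * n →
      (PathIn.compSeq q (k + 1)).len = (PathIn.compSeq q k).len + (q (k + 1)).len := by
    intro k hk
    exact len_comp (hcomp k hk)
  have hcmono : ∀ j k, j ≤ k → k ≤ 2 * n →
      (PathIn.compSeq q j).len ≤ (PathIn.compSeq q k).len := by
    intro j k hjk
    induction k with
    | zero => intro _; have : j = 0 := by omega
              rw [this]
    | succ k2 ih =>
      intro hk2
      rcases Nat.lt_or_ge j (k2 + 1) with hlt | hge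
      · have h1 := ih (by omega) (by omega)
        have h2 := hcsucc k2 (by omega)
        omega
      · have : j = k2 + 1 := by omega
        rw [this]
  have hc2n : (PathIn.compSeq q (2 * n)).len = (v0.comp w).len := by rw [hW]
  have hcM : ∀ k, k ≤ 2 * n → (PathIn.compSeq q k).len ≤ (v0.comp w).len := by
    intro k hk
    rw [← hc2n]
    exact hcmono k (2 * n) hk le_rfl
  -- pieces as segments
  have hpre0 : q 0 = seg (v0.comp w) 0 (PathIn.compSeq q 0).len := by
    obtain ⟨R, hR1, hR2⟩ := hresid (2 * n) 0 (by omega)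
    obtain ⟨h1, -, h2⟩ := eq_pre hR1 hR2
    exact h1.trans (pre_eq_seg (by omega))
  have hpiece : ∀ k, k < 2 * n → q (k + 1) =
      seg (v0.comp w) (PathIn.compSeq q k).len (PathIn.compSeq q (k + 1)).len := by
    intro k hk
    obtain ⟨R, hR1, hR2⟩ := hresid (2 * n - (k + 1)) (k + 1) (by omega)
    rw [htgt (k + 1) (by omega)] at hR1
    have hstep : v0.comp w = (PathIn.compSeq q k).comp ((q (k + 1)).comp R) := by
      rw [hR2]; exact comp_assoc (hcomp k hk) hR1
    obtain ⟨hmid, hbound, -⟩ := mid_eq (hcomp k hk) hR1 hstep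
    rw [hcsucc k hk]
    exact hmid
  refine ⟨hvw, fun i => if i ≤ 1 then 0 else (PathIn.compSeq q (2 * i - 3)).len,
    fun i => (PathIn.compSeq q (2 * i)).len, ?_⟩
  refine ⟨if_pos le_rfl, hc0, hc2n, le_rfl, ?_, ?_, ?_, ?_⟩
  · -- elt
    intro i i1 i2
    have hdm := hd i i1 i2
    rcases Nat.eq_or_lt_of_le i1 with heq | hgt
    · -- i = 1
      subst heq
      rw [if_pos le_rfl]
      rw [show 2 * 1 - 2 = 0 by omega, show 2 * 1 - 1 = 1 by omega,
        show 2 * 1 = 2 by omega] at hdm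
      have h1p : q 1 = seg (v0.comp w) (PathIn.compSeq q 0).len
          (PathIn.compSeq q 1).len := hpiece 0 (by omega)
      have h2p : q 2 = seg (v0.comp w) (PathIn.compSeq q 1).len
          (PathIn.compSeq q 2).len := hpiece 1 (by omega)
      rw [hpre0, h1p, h2p] at hdm
      rw [comp_seg (hcmono 0 1 (by omega) (by omega)) (hcmono 1 2 (by omega) (by omega))
        (hcM 2 (by omega)), comp_seg (Nat.zero_le _)
        (hcmono 0 2 (by omega) (by omega)) (hcM 2 (by omega))] at hdm
      refine ⟨Nat.zero_le _, hcM _ (by omega), ?_⟩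
      show seg (v0.comp w) 0 (PathIn.compSeq q (2 * 1)).len ∈ S
      rw [show 2 * 1 = 2 by omega]
      exact hdm
    · -- i ≥ 2
      rw [if_neg (by omega)]
      obtain ⟨a, ha3⟩ : ∃ a, a = 2 * i - 3 := ⟨_, rfl⟩
      rw [show 2 * i - 2 = a + 1 by omega, show 2 * i - 1 = a + 2 by omega,
        show 2 * i = a + 3 by omega] at hdm
      have h1p : q (a + 1) = seg (v0.comp w) (PathIn.compSeq q a).len
          (PathIn.compSeq q (a + 1)).len := hpiece a (by omega)
      have h2p : q (a + 2) = seg (v0.comp w) (PathIn.compSeq q (a + 1)).len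
          (PathIn.compSeq q (a + 2)).len := hpiece (a + 1) (by omega)
      have h3p : q (a + 3) = seg (v0.comp w) (PathIn.compSeq q (a + 2)).len
          (PathIn.compSeq q (a + 3)).len := hpiece (a + 2) (by omega)
      rw [h1p, h2p, h3p] at hdm
      rw [comp_seg (hcmono _ _ (by omega) (by omega)) (hcmono _ _ (by omega) (by omega))
        (hcM _ (by omega)), comp_seg (hcmono _ _ (by omega) (by omega))
        (hcmono _ _ (by omega) (by omega)) (hcM _ (by omega))] at hdm
      rw [show 2 * i - 3 = a from ha3.symm, show 2 * i = a + 3 by omega]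
      exact ⟨hcmono _ _ (by omega) (by omega), hcM _ (by omega), hdm⟩
  · -- sep
    intro i i1 i2
    constructor
    · rw [if_neg (show ¬ (i + 1 ≤ 1) by omega)]
      exact hcmono (2 * (i - 1)) (2 * (i + 1) - 3) (by omega) (by omega)
    · rw [if_neg (show ¬ (i + 1 ≤ 1) by omega)]
      have hx := hcsucc (2 * i - 1) (by omega)
      rw [show 2 * i - 1 + 1 = 2 * i by omega] at hx
      have hv := hc i i1 i2
      have he1 : 2 * (i + 1) - 3 = 2 * i - 1 := by omega
      rw [he1]
      omega
  · -- gap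
    intro i i1 i2 x y f1 f2 f3 f4 hmem
    rw [if_neg (show ¬ (i + 1 ≤ 1) by omega), show 2 * (i + 1) - 3 = 2 * i - 1 by omega] at f2
    rw [show 2 * (i - 1) = 2 * i - 2 by omega] at f1
    have f4' : y ≤ (PathIn.compSeq q (2 * i + 2)).len := by
      rw [show 2 * i + 2 = 2 * (i + 1) by omega]; exact f4
    have hq2i : q (2 * i) = seg (v0.comp w) (PathIn.compSeq q (2 * i - 1)).len
        (PathIn.compSeq q (2 * i)).len := by
      have := hpiece (2 * i - 1) (by omega)
      rwa [show 2 * i - 1 + 1 = 2 * i by omega] at this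
    have hqm : q (2 * i - 1) = seg (v0.comp w) (PathIn.compSeq q (2 * i - 2)).len
        (PathIn.compSeq q (2 * i - 1)).len := by
      have := hpiece (2 * i - 2) (by omega)
      rwa [show 2 * i - 2 + 1 = 2 * i - 1 by omega] at this
    have hq1 : q (2 * i + 1) = seg (v0.comp w) (PathIn.compSeq q (2 * i)).len
        (PathIn.compSeq q (2 * i + 1)).len := hpiece (2 * i) (by omega)
    have hq2 : q (2 * i + 2) = seg (v0.comp w) (PathIn.compSeq q (2 * i + 1)).len
        (PathIn.compSeq q (2 * i + 2)).len := hpiece (2 * i + 1) (by omega)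
    -- bounds
    have hxy : x ≤ y := by
      have := hcmono (2 * i - 1) (2 * i) (by omega) (by omega)
      omega
    have hyM : y ≤ (v0.comp w).len := le_trans f4' (hcM _ (by omega))
    have hm12 : (PathIn.compSeq q (2 * i - 1)).len ≤ (PathIn.compSeq q (2 * i)).len :=
      hcmono _ _ (by omega) (by omega)
    apply he i i1 i2
    refine ⟨seg (v0.comp w) (PathIn.compSeq q (2 * i)).len y,
      seg (v0.comp w) x (PathIn.compSeq q (2 * i - 1)).len, ?_, ?_, ?_, ?_, ?_, ?_, ?_⟩
    · rw [len_seg (by omega) hyM]; omega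
    · rw [len_seg (by omega) (hcM _ (by omega))]; omega
    · rw [hq2i, tgt_seg (by omega) (hcM _ (by omega)),
        src_seg (hcmono _ _ (by omega) (by omega)) (hcM _ (by omega))]
    · rw [hq2i, tgt_seg (hcmono _ _ (by omega) (by omega)) (hcM _ (by omega)),
        src_seg (by omega) hyM]
    · rw [hq2i, comp_seg (hcmono _ _ (by omega) (by omega)) (by omega) hyM,
        comp_seg (by omega) (by omega) hyM]
      exact hmem
    · refine ⟨seg (v0.comp w) y (PathIn.compSeq q (2 * i + 2)).len, ?_, ?_⟩
      · rw [tgt_seg (by omega) hyM, src_seg f4' (hcM _ (by omega))]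
      · rw [hq1, hq2]
        rw [comp_seg (hcmono _ _ (by omega) (by omega)) (hcmono _ _ (by omega) (by omega))
          (hcM _ (by omega))]
        rw [comp_seg (by omega) f4' (hcM _ (by omega))]
    · refine ⟨seg (v0.comp w) (PathIn.compSeq q (2 * i - 2)).len x, ?_, ?_⟩
      · have hxM : x ≤ (v0.comp w).len := by
          have := hcM (2 * i - 1) (by omega)
          omega
        rw [tgt_seg f1 hxM, src_seg (by omega) (hcM _ (by omega))]
      · rw [hqm]
        rw [comp_seg f1 (by omega) (hcM _ (by omega))]
  · -- one
    intro hn1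
    subst hn1
    have hx : (PathIn.compSeq q 1).len = (PathIn.compSeq q 0).len + (q 1).len :=
      hcsucc 0 (by omega)
    have hy := hcmono 1 2 (by omega) (by omega)
    have hz := h3 rfl
    have hgoal : (PathIn.compSeq q (2 * 1)).len = (PathIn.compSeq q 2).len := rfl
    rw [← hc2n, hgoal]
    omega

end QOP
/-- characterization of `n`-quasioverlaps (`n ≥ 1`) by factorizations
`w = u₁ v₁ u₂ ⋯ u_{n-1} v_{n-1} u_n v_n` with `v₀` the second component of the pair. -/
theorem quasioverlap_iff_factorization {V : Type u} [Quiver.{v + 1} V]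
    [Fintype V] [∀ a b : V, Fintype (a ⟶ b)]
    (S : Set (PathIn V)) (hS : ∀ p ∈ S, 2 ≤ p.len) (hred : PathIn.Reduced S)
    (n : ℕ) (hn : 1 ≤ n) (w v0 : PathIn V) (hv0 : 0 < v0.len) :
    (w, v0) ∈ PathIn.QOverlaps S n ↔
      ∃ q : ℕ → PathIn V,
        -- the piece in position `0` is `v₀` itself
        q 0 = v0 ∧
        -- `w` is the composition `u₁ v₁ ⋯ u_n v_n` (not including `v₀`)
        w = PathIn.compSeq (fun m => q (m + 1)) (2 * n - 1) ∧
        PathIn.FactorConds S n q ∧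
        -- condition (3): `u₁` has positive length if `n = 1`
        (n = 1 → 0 < (q 1).len) := by
  constructor
  · intro hmem
    obtain ⟨hvw, α, β, ch⟩ := (QOP.qo_iff_chain hred n w v0 hv0).mp hmem
    exact QOP.chain_to_fact hred hv0 hn hvw ch
  · rintro ⟨q, hq0, hw, hfc, h3⟩
    obtain ⟨hvw, α, β, ch⟩ := QOP.fact_to_chain hv0 hn hq0 hw hfc h3
    exact (QOP.qo_iff_chain hred n w v0 hv0).mpr ⟨hvw, α, β, ch⟩
end
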